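/- arXiv:math/0009032 — 2 statements merged into one kernel-verified Lean document; each statement's English description precedes it below -/
import Mathlib

section
/- Let R be an algebra over a field F such that the group of units U(R) contains an ω-subgroup, and let ΔU = {u ∈ U(R) : [U(R) : C_{U(R)}(u)] < ∞} be the FC-radical of U(R). If u, v ∈ ΔU are of finite order, then the commutator c = u⁻¹v⁻¹uv is unipotent (i.e., c - 1 is nilpotent in R) and c commutes with every element of ΔU. -/
/-- The centralizer of a ring element `a` inside the unit group `Rˣ`. -/
def unitCentralizer {R : Type*} [Ring R] (a : R) : Subgroup Rˣ where
  carrier := {u : Rˣ | (u : R) * a = a * (u : R)}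
  one_mem' := by simp
  mul_mem' := by
    intro u v hu hv
    have hu' : Commute ((u : Rˣ) : R) a := hu
    have hv' : Commute ((v : Rˣ) : R) a := hv
    show ((u * v : Rˣ) : R) * a = a * ((u * v : Rˣ) : R)
    rw [Units.val_mul]
    exact hu'.mul_left hv'
  inv_mem' := by
    intro u hu
    have hu' : Commute ((u : Rˣ) : R) a := hu
    exact hu'.units_inv_left

@[simp] lemma mem_unitCentralizer {R : Type*} [Ring R] {a : R} {u : Rˣ} :
    u ∈ unitCentralizer a ↔ (u : R) * a = a * (u : R) := Iff.rfl

/-- The FC-subring `∇(R)` of a ring `R`: the set of elements whose centralizer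
in the unit group has finite index. -/
def FCSubring (R : Type*) [Ring R] : Set R :=
  {a : R | (unitCentralizer a).FiniteIndex}

/-- An infinite subgroup `H ≤ Rˣ` is an ω-subgroup if for every nonzero Lie
commutator `x*y - y*x` only finitely many elements of the form `1 - h`, `h ∈ H`,
annihilate it on the left. -/
def IsOmegaSubgroup {R : Type*} [Ring R] (H : Subgroup Rˣ) : Prop :=
  (H : Set Rˣ).Infinite ∧
    ∀ x y : R, x * y - y * x ≠ 0 →
      {h : Rˣ | h ∈ H ∧ (1 - (h : R)) * (x * y - y * x) = 0}.Finite

/-- The FC-radical `ΔU(R)` of the unit group: the subgroup of units having only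
finitely many conjugates, i.e. whose centralizer has finite index. -/
def FCRadical (R : Type*) [Ring R] : Subgroup Rˣ where
  carrier := {u : Rˣ | (unitCentralizer (u : R)).FiniteIndex}
  one_mem' := by
    have h : unitCentralizer ((1 : Rˣ) : R) = ⊤ := by
      ext u; simp
    show (unitCentralizer ((1 : Rˣ) : R)).FiniteIndex
    rw [h]
    infer_instance
  mul_mem' := by
    intro u v hu hv
    have hle : unitCentralizer (u : R) ⊓ unitCentralizer (v : R) ≤
        unitCentralizer ((u * v : Rˣ) : R) := by
      intro w hw
      have hwu : (w : R) * (u : R) = (u : R) * (w : R) := hw.1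
      have hwv : (w : R) * (v : R) = (v : R) * (w : R) := hw.2
      show (w : R) * ((u * v : Rˣ) : R) = ((u * v : Rˣ) : R) * (w : R)
      rw [Units.val_mul, ← mul_assoc, hwu, mul_assoc, hwv, ← mul_assoc]
    haveI : (unitCentralizer (u : R)).FiniteIndex := hu
    haveI : (unitCentralizer (v : R)).FiniteIndex := hv
    exact Subgroup.finiteIndex_of_le hle
  inv_mem' := by
    intro u hu
    have h : unitCentralizer ((u⁻¹ : Rˣ) : R) = unitCentralizer (u : R) := by
      ext w
      constructor
      · intro hw
        have hw' : Commute ((w : Rˣ) : R) ((u⁻¹ : Rˣ) : R) := hw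
        have h2 : Commute ((w : Rˣ) : R) ((u⁻¹⁻¹ : Rˣ) : R) := hw'.units_inv_right
        rw [inv_inv] at h2
        exact h2
      · intro hw
        have hw' : Commute ((w : Rˣ) : R) ((u : Rˣ) : R) := hw
        exact hw'.units_inv_right
    show (unitCentralizer ((u⁻¹ : Rˣ) : R)).FiniteIndex
    rw [h]
    exact hu

@[simp] lemma mem_FCRadical {R : Type*} [Ring R] {u : Rˣ} :
    u ∈ FCRadical R ↔ (unitCentralizer (u : R)).FiniteIndex := Iff.rfl

section Infra

variable {R : Type*} [Ring R]

/-- Generic pigeonhole: an infinite set mapped into a finite image has an infinite fiber. -/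
lemma exists_infinite_fiber' {α β : Type*} {S : Set α} (hS : S.Infinite) (f : α → β)
    (him : (f '' S).Finite) : ∃ b, {a | a ∈ S ∧ f a = b}.Infinite := by
  by_contra hcon
  push_neg at hcon
  have hfibs : ∀ b, {a | a ∈ S ∧ f a = b}.Finite := fun b => hcon b
  have hsub : S ⊆ ⋃ b ∈ f '' S, {a | a ∈ S ∧ f a = b} := by
    intro a ha
    exact Set.mem_biUnion (Set.mem_image_of_mem f ha) ⟨ha, rfl⟩
  exact hS ((him.biUnion (fun b _ => hfibs b)).subset hsub)

/-- A square-zero element `a` gives the unit `1 + a`. -/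
def sqZeroUnit (a : R) (h : a * a = 0) : Rˣ where
  val := 1 + a
  inv := 1 - a
  val_inv := by
    rw [mul_sub, mul_one, add_mul, one_mul, h, add_zero, add_sub_cancel_right]
  inv_val := by
    rw [sub_mul, one_mul, mul_add, mul_one, h, add_zero, add_sub_cancel_right]

@[simp] lemma sqZeroUnit_val (a : R) (h : a * a = 0) : ((sqZeroUnit a h : Rˣ) : R) = 1 + a := rfl
@[simp] lemma sqZeroUnit_inv (a : R) (h : a * a = 0) : (((sqZeroUnit a h)⁻¹ : Rˣ) : R) = 1 - a := rfl

/-- The set of conjugates (in `R`) of an element whose unit-centralizer has finite index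
is finite. -/
lemma orbit_finite_of_finiteIndex {a : R} (ha : (unitCentralizer a).FiniteIndex) :
    (Set.range (fun w : Rˣ => (w : R) * a * ((w⁻¹ : Rˣ) : R))).Finite := by
  haveI := ha
  have h0 : (unitCentralizer a).index ≠ 0 := ha.index_ne_zero
  rw [Subgroup.index_eq_card] at h0
  have hfin : Finite (Rˣ ⧸ unitCentralizer a) := (Nat.card_ne_zero.mp h0).2
  have hwd : ∀ w w' : Rˣ, (QuotientGroup.leftRel (unitCentralizer a)) w w' →
      (w : R) * a * ((w⁻¹ : Rˣ) : R) = (w' : R) * a * ((w'⁻¹ : Rˣ) : R) := by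
    intro w w' hrel
    rw [QuotientGroup.leftRel_apply] at hrel
    obtain ⟨c, hw', hc⟩ : ∃ c : Rˣ, w' = w * c ∧ (c : R) * a = a * (c : R) :=
      ⟨w⁻¹ * w', by simp, hrel⟩
    subst hw'
    have h1 : (c : R) * a * ((c⁻¹ : Rˣ) : R) = a := by
      rw [hc, mul_assoc, ← Units.val_mul, mul_inv_cancel, Units.val_one, mul_one]
    conv_lhs => rw [← h1]
    simp [Units.val_mul, mul_inv_rev, mul_assoc]
  let f : Rˣ ⧸ unitCentralizer a → R := Quotient.lift _ hwd
  have hsub : Set.range (fun w : Rˣ => (w : R) * a * ((w⁻¹ : Rˣ) : R)) ⊆ Set.range f := by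
    rintro x ⟨w, rfl⟩
    exact ⟨QuotientGroup.mk w, rfl⟩
  exact (Set.finite_range f).subset hsub

end Infra
section CommutingTools

variable {R : Type*} [Ring R]

lemma unit_inv_comm (W : Rˣ) (c : R) (h : (W : R) * c = c * (W : R)) :
    ((W⁻¹ : Rˣ) : R) * c = c * ((W⁻¹ : Rˣ) : R) := by
  have h2 := congrArg (fun t => ((W⁻¹ : Rˣ) : R) * t * ((W⁻¹ : Rˣ) : R)) h
  simp only [mul_assoc, Units.inv_mul_cancel_left, Units.mul_inv, mul_one] at h2
  exact h2.symm

lemma conj_comm_of_eq {w w' : Rˣ} {a : R}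
    (h : (w : R) * a * ((w⁻¹ : Rˣ) : R) = (w' : R) * a * ((w'⁻¹ : Rˣ) : R)) :
    ((w'⁻¹ * w : Rˣ) : R) * a = a * ((w'⁻¹ * w : Rˣ) : R) := by
  have h2 := congrArg (fun t => ((w'⁻¹ : Rˣ) : R) * t * (w : R)) h
  simp only [mul_assoc, Units.inv_mul_cancel_left, Units.inv_mul, mul_one] at h2
  rw [Units.val_mul, mul_assoc]
  exact h2

/-- From an infinite subgroup-set and two finite-index centralizers, an
infinite set of elements of `H` commuting (in `R`) with both `a` and `b`. -/
lemma infinite_commuting_pair (H : Subgroup Rˣ) (hHinf : (H : Set Rˣ).Infinite)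
    {a b : R} (ha : (Set.range (fun w : Rˣ => (w : R) * a * ((w⁻¹ : Rˣ) : R))).Finite)
    (hb : (Set.range (fun w : Rˣ => (w : R) * b * ((w⁻¹ : Rˣ) : R))).Finite) :
    {k : Rˣ | k ∈ H ∧ (k : R) * a = a * (k : R) ∧ (k : R) * b = b * (k : R)}.Infinite := by
  have him : ((fun w : Rˣ => ((w : R) * a * ((w⁻¹ : Rˣ) : R), (w : R) * b * ((w⁻¹ : Rˣ) : R)))
      '' (H : Set Rˣ)).Finite := by
    apply Set.Finite.subset (ha.prod hb)
    rintro p ⟨w, _, rfl⟩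
    exact ⟨⟨w, rfl⟩, ⟨w, rfl⟩⟩
  obtain ⟨p, hfib⟩ := exists_infinite_fiber' hHinf _ him
  obtain ⟨k₀, hk₀⟩ := hfib.nonempty
  have hsub : (fun k => k₀⁻¹ * k) '' {x | x ∈ (H : Set Rˣ) ∧
        ((x : R) * a * ((x⁻¹ : Rˣ) : R), (x : R) * b * ((x⁻¹ : Rˣ) : R)) = p} ⊆
      {k : Rˣ | k ∈ H ∧ (k : R) * a = a * (k : R) ∧ (k : R) * b = b * (k : R)} := by
    rintro x ⟨k, hk, rfl⟩
    have hfk := hk.2.trans hk₀.2.symm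
    have e1 := congrArg Prod.fst hfk
    have e2 := congrArg Prod.snd hfk
    simp only [] at e1 e2
    exact ⟨H.mul_mem (H.inv_mem hk₀.1) hk.1, conj_comm_of_eq e1, conj_comm_of_eq e2⟩
  have hinj : Set.InjOn (fun k => k₀⁻¹ * k) {x | x ∈ (H : Set Rˣ) ∧
      ((x : R) * a * ((x⁻¹ : Rˣ) : R), (x : R) * b * ((x⁻¹ : Rˣ) : R)) = p} := by
    intro x _ y _ hxy
    simpa using congrArg (fun t => k₀ * t) hxy
  exact Set.Infinite.mono hsub (hfib.image hinj)

end CommutingTools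
section Fact2

variable {R : Type*} [Ring R]

/-- KEY LEMMA (ω-trick): a unipotent FC-unit commutes with every FC-unit. -/
lemma fact2 {H : Subgroup Rˣ} (hH : IsOmegaSubgroup H) (x y : Rˣ)
    (hx : (unitCentralizer (x : R)).FiniteIndex) (hy : (unitCentralizer (y : R)).FiniteIndex)
    (hnil : IsNilpotent ((y : R) - 1)) :
    (x : R) * (y : R) = (y : R) * (x : R) := by
  by_contra hne
  have hz : (x : R) * (y : R) - (y : R) * (x : R) ≠ 0 := sub_ne_zero.mpr hne
  set z : R := (x : R) * (y : R) - (y : R) * (x : R) with hzdef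
  set ν : R := (y : R) - 1 with hνdef
  set K : Set Rˣ := {k : Rˣ | k ∈ H ∧ (k : R) * (x : R) = (x : R) * (k : R) ∧
      (k : R) * (y : R) = (y : R) * (k : R)} with hKdef
  have hKinf : K.Infinite := infinite_commuting_pair H hH.1 (orbit_finite_of_finiteIndex hx) (orbit_finite_of_finiteIndex hy)
  have hcommν : ∀ k : Rˣ, k ∈ K → (k : R) * ν = ν * (k : R) := by
    intro k hk
    rw [hνdef, mul_sub, sub_mul, mul_one, one_mul, hk.2.2]
  have hunit : ∀ k : Rˣ, k ∈ K → IsUnit (1 + (k : R) * ν) := by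
    intro k hk
    obtain ⟨n, hn⟩ := hnil
    have hnilk : IsNilpotent ((k : R) * ν) :=
      ⟨n, by rw [(Commute.mul_pow (hcommν k hk) n), hn, mul_zero]⟩
    have := (hnilk.neg).isUnit_one_sub
    rwa [sub_neg_eq_add] at this
  classical
  set W : Rˣ → Rˣ := fun k => if h : k ∈ K then (hunit k h).unit else 1 with hWdef
  have hWval : ∀ k : Rˣ, k ∈ K → ((W k : Rˣ) : R) = 1 + (k : R) * ν := by
    intro k hk
    simp only [hWdef, dif_pos hk]
    exact (hunit k hk).unit_spec
  -- the commutation defect of x with W k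
  have key1 : ∀ k : Rˣ, k ∈ K →
      (x : R) * ((W k : Rˣ) : R) = ((W k : Rˣ) : R) * (x : R) + (k : R) * z := by
    intro k hk
    rw [hWval k hk]
    have e1 : (x : R) * (1 + (k : R) * ν) = (x : R) + (x : R) * (k : R) * ν := by
      rw [mul_add, mul_one, mul_assoc]
    have e2 : (1 + (k : R) * ν) * (x : R) = (x : R) + (k : R) * (ν * (x : R)) := by
      rw [add_mul, one_mul, mul_assoc]
    rw [e1, e2, ← hk.2.1]
    have e3 : (x : R) * ν - ν * (x : R) = z := by
      rw [hνdef, hzdef, mul_sub, sub_mul, mul_one, one_mul]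
      abel
    have e4 : (k : R) * z = (k : R) * ((x : R) * ν) - (k : R) * (ν * (x : R)) := by
      rw [← mul_sub, e3]
    rw [e4]
    rw [mul_assoc]
    abel
  -- conjugation formula
  have hconj : ∀ k : Rˣ, k ∈ K →
      (((W k)⁻¹ : Rˣ) : R) * (x : R) * ((W k : Rˣ) : R)
        = (x : R) + (((W k)⁻¹ : Rˣ) : R) * ((k : R) * z) := by
    intro k hk
    rw [mul_assoc, key1 k hk, mul_add, Units.inv_mul_cancel_left]
  -- pigeonhole over K
  have him : ((fun k : Rˣ => (((W k)⁻¹ : Rˣ) : R) * (x : R) * ((W k : Rˣ) : R)) '' K).Finite := by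
    apply Set.Finite.subset (orbit_finite_of_finiteIndex hx)
    rintro t ⟨k, _, rfl⟩
    exact ⟨(W k)⁻¹, by simp⟩
  obtain ⟨t, hfib⟩ := exists_infinite_fiber' hKinf _ him
  obtain ⟨k₀, hk₀K, hk₀t⟩ := hfib.nonempty
  set β : R := (((W k₀)⁻¹ : Rˣ) : R) * ((k₀ : R) * z) with hβdef
  have hβeq : ∀ k : Rˣ, k ∈ K → (((W k)⁻¹ : Rˣ) : R) * (x : R) * ((W k : Rˣ) : R) = t →
      (((W k)⁻¹ : Rˣ) : R) * ((k : R) * z) = β := by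
    intro k hkK hkt
    have := (hconj k hkK).symm.trans ((hkt.trans hk₀t.symm).trans (hconj k₀ hk₀K))
    exact add_left_cancel this
  have hm : ∀ k : Rˣ, k ∈ K → (((W k)⁻¹ : Rˣ) : R) * (x : R) * ((W k : Rˣ) : R) = t →
      (k : R) * (z - ν * β) = β := by
    intro k hkK hkt
    have h1 : (k : R) * z = ((W k : Rˣ) : R) * β := by
      rw [← hβeq k hkK hkt, Units.mul_inv_cancel_left]
    rw [mul_sub, h1, hWval k hkK, add_mul, one_mul, mul_assoc]
    abel
  have hann : ∀ k : Rˣ, k ∈ K → (((W k)⁻¹ : Rˣ) : R) * (x : R) * ((W k : Rˣ) : R) = t →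
      (1 - ((k * k₀⁻¹ : Rˣ) : R)) * β = 0 := by
    intro k hkK hkt
    have h1 := hm k hkK hkt
    have h0 := hm k₀ hk₀K hk₀t
    have h2 : z - ν * β = ((k₀⁻¹ : Rˣ) : R) * β := by
      have := congrArg (fun s => ((k₀⁻¹ : Rˣ) : R) * s) h0
      simpa [Units.inv_mul_cancel_left] using this
    rw [h2] at h1
    rw [sub_mul, one_mul, sub_eq_zero, Units.val_mul, mul_assoc]
    exact h1.symm
  -- β is a Lie commutator
  have hWcy : ((W k₀ : Rˣ) : R) * (y : R) = (y : R) * ((W k₀ : Rˣ) : R) := by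
    rw [hWval k₀ hk₀K]
    have hνy : ν * (y : R) = (y : R) * ν := by rw [hνdef]; noncomm_ring
    have h1 : (k₀ : R) * ν * (y : R) = (y : R) * ((k₀ : R) * ν) := by
      rw [mul_assoc, hνy, ← mul_assoc, hk₀K.2.2, mul_assoc]
    rw [add_mul, mul_add, one_mul, mul_one, h1]
  have hWinvy := unit_inv_comm (W k₀) (y : R) hWcy
  have hcommutator :
      ((((W k₀)⁻¹ : Rˣ) : R) * ((k₀ : R) * (x : R))) * (y : R)
        - (y : R) * ((((W k₀)⁻¹ : Rˣ) : R) * ((k₀ : R) * (x : R))) = β := by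
    have e1 : (y : R) * ((((W k₀)⁻¹ : Rˣ) : R) * ((k₀ : R) * (x : R)))
        = (((W k₀)⁻¹ : Rˣ) : R) * ((k₀ : R) * ((y : R) * (x : R))) := by
      calc (y : R) * ((((W k₀)⁻¹ : Rˣ) : R) * ((k₀ : R) * (x : R)))
          = ((y : R) * (((W k₀)⁻¹ : Rˣ) : R)) * ((k₀ : R) * (x : R)) := by rw [mul_assoc]
        _ = ((((W k₀)⁻¹ : Rˣ) : R) * (y : R)) * ((k₀ : R) * (x : R)) := by rw [hWinvy]
        _ = (((W k₀)⁻¹ : Rˣ) : R) * ((y : R) * ((k₀ : R) * (x : R))) := by rw [mul_assoc]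
        _ = (((W k₀)⁻¹ : Rˣ) : R) * (((y : R) * (k₀ : R)) * (x : R)) := by rw [mul_assoc]
        _ = (((W k₀)⁻¹ : Rˣ) : R) * (((k₀ : R) * (y : R)) * (x : R)) := by rw [hk₀K.2.2]
        _ = (((W k₀)⁻¹ : Rˣ) : R) * ((k₀ : R) * ((y : R) * (x : R))) := by rw [mul_assoc]
    rw [e1, hβdef, hzdef]
    rw [mul_assoc (((W k₀)⁻¹ : Rˣ) : R) ((k₀ : R) * (x : R)) (y : R),
      mul_assoc ((k₀ : R)) ((x : R)) ((y : R)), ← mul_sub, ← mul_sub]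
  have hβne : β ≠ 0 := by
    intro h0
    apply hz
    have h1 : (k₀ : R) * z = 0 := by
      have := congrArg (fun s => ((W k₀ : Rˣ) : R) * s) h0
      simpa [hβdef, Units.mul_inv_cancel_left] using this
    have := congrArg (fun s => ((k₀⁻¹ : Rˣ) : R) * s) h1
    simpa [Units.inv_mul_cancel_left] using this
  have hfin := hH.2 _ _ (by rw [hcommutator]; exact hβne)
  apply hfin.not_infinite
  have hsub : (fun k => k * k₀⁻¹) '' {a | a ∈ K ∧
        (((W a)⁻¹ : Rˣ) : R) * (x : R) * ((W a : Rˣ) : R) = t} ⊆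
      {h : Rˣ | h ∈ H ∧ (1 - (h : R)) *
        (((((W k₀)⁻¹ : Rˣ) : R) * ((k₀ : R) * (x : R))) * (y : R)
          - (y : R) * ((((W k₀)⁻¹ : Rˣ) : R) * ((k₀ : R) * (x : R)))) = 0} := by
    rintro h ⟨k, ⟨hkK, hkt⟩, rfl⟩
    refine ⟨H.mul_mem hkK.1 (H.inv_mem hk₀K.1), ?_⟩
    rw [hcommutator]
    exact hann k hkK hkt
  exact Set.Infinite.mono hsub (hfib.image (fun a _ b _ hab => by
    simpa using congrArg (fun s => s * k₀) hab))

end Fact2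
section IdemCentral

variable {R : Type*} [Ring R]

/-- Corner-vanishing: if `e` is an idempotent with finitely many unit-conjugates, any
element `c` with `e*c = 0` and `c*e = c` vanishes (given an ω-subgroup). -/
lemma corner_vanish {H : Subgroup Rˣ} (hH : IsOmegaSubgroup H) {e : R} (he : e * e = e)
    (horb : (Set.range (fun w : Rˣ => (w : R) * e * ((w⁻¹ : Rˣ) : R))).Finite)
    {c : R} (h1 : e * c = 0) (h2 : c * e = c) : c = 0 := by
  by_contra hcne
  set K : Set Rˣ := {k : Rˣ | k ∈ H ∧ (k : R) * e = e * (k : R) ∧ (k : R) * e = e * (k : R)}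
    with hKdef
  have hKinf : K.Infinite := infinite_commuting_pair H hH.1 horb horb
  have hsq : ∀ k : Rˣ, k ∈ K → ((k : R) * c) * ((k : R) * c) = 0 := by
    intro k hk
    have hc : c * ((k : R) * c) = 0 := by
      calc c * ((k : R) * c) = (c * e) * ((k : R) * c) := by rw [h2]
        _ = c * ((e * (k : R)) * c) := by rw [mul_assoc, ← mul_assoc e]
        _ = c * (((k : R) * e) * c) := by rw [← hk.2.1]
        _ = c * ((k : R) * (e * c)) := by rw [mul_assoc]
        _ = 0 := by rw [h1, mul_zero, mul_zero]
    rw [mul_assoc, hc, mul_zero]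
  have heck : ∀ k : Rˣ, k ∈ K → e * ((k : R) * c) = 0 := by
    intro k hk
    rw [← mul_assoc, ← hk.2.1, mul_assoc, h1, mul_zero]
  have hcke : ∀ k : Rˣ, k ∈ K → ((k : R) * c) * e = (k : R) * c := by
    intro k hk
    rw [mul_assoc, h2]
  classical
  set W : Rˣ → Rˣ := fun k => if h : k ∈ K then sqZeroUnit _ (hsq k h) else 1 with hWdef
  have hWval : ∀ k : Rˣ, k ∈ K → ((W k : Rˣ) : R) = 1 + (k : R) * c := by
    intro k hk; simp only [hWdef, dif_pos hk, sqZeroUnit_val]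
  have hWinv : ∀ k : Rˣ, k ∈ K → (((W k)⁻¹ : Rˣ) : R) = 1 - (k : R) * c := by
    intro k hk; simp only [hWdef, dif_pos hk, sqZeroUnit_inv]
  have hconj : ∀ k : Rˣ, k ∈ K →
      (((W k)⁻¹ : Rˣ) : R) * e * ((W k : Rˣ) : R) = e - (k : R) * c := by
    intro k hk
    rw [hWval k hk, hWinv k hk]
    have hexp : (1 - (k : R) * c) * e * (1 + (k : R) * c)
        = e + e * ((k : R) * c) - ((k : R) * c) * e - ((k : R) * c) * (e * ((k : R) * c)) := by
      noncomm_ring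
    rw [hexp, heck k hk, hcke k hk, mul_zero, sub_zero, add_zero]
  have him : ((fun k : Rˣ => (((W k)⁻¹ : Rˣ) : R) * e * ((W k : Rˣ) : R)) '' K).Finite := by
    apply Set.Finite.subset horb
    rintro t ⟨k, _, rfl⟩
    exact ⟨(W k)⁻¹, by simp⟩
  obtain ⟨t, hfib⟩ := exists_infinite_fiber' hKinf _ him
  obtain ⟨k₀, hk₀K, hk₀t⟩ := hfib.nonempty
  have hann : ∀ k : Rˣ, k ∈ K → (((W k)⁻¹ : Rˣ) : R) * e * ((W k : Rˣ) : R) = t →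
      (1 - ((k₀⁻¹ * k : Rˣ) : R)) * c = 0 := by
    intro k hkK hkt
    have h3 : e - (k : R) * c = e - (k₀ : R) * c := by
      rw [← hconj k hkK, ← hconj k₀ hk₀K, hkt, hk₀t]
    have h4 : (k : R) * c = (k₀ : R) * c := by
      have := congrArg (fun s => e - s) h3
      simpa using h3
    have h5 := congrArg (fun s => ((k₀⁻¹ : Rˣ) : R) * s) h4
    simp only [Units.inv_mul_cancel_left] at h5
    rw [← mul_assoc] at h5
    rw [sub_mul, one_mul, sub_eq_zero, Units.val_mul]
    exact h5.symm
  have hcomm : c * e - e * c = c := by rw [h1, h2, sub_zero]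
  have hfin := hH.2 c e (by rw [hcomm]; exact hcne)
  apply hfin.not_infinite
  have hsub : (fun k => k₀⁻¹ * k) '' {a | a ∈ K ∧
        (((W a)⁻¹ : Rˣ) : R) * e * ((W a : Rˣ) : R) = t} ⊆
      {h : Rˣ | h ∈ H ∧ (1 - (h : R)) * (c * e - e * c) = 0} := by
    rintro h ⟨k, ⟨hkK, hkt⟩, rfl⟩
    refine ⟨H.mul_mem (H.inv_mem hk₀K.1) hkK.1, ?_⟩
    rw [hcomm]
    exact hann k hkK hkt
  exact Set.Infinite.mono hsub (hfib.image (fun a _ b _ hab => by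
    simpa using congrArg (fun s => k₀ * s) hab))

/-- LEMMA I: an idempotent with finitely many unit-conjugates is central. -/
lemma idem_central {H : Subgroup Rˣ} (hH : IsOmegaSubgroup H) {e : R} (he : e * e = e)
    (horb : (Set.range (fun w : Rˣ => (w : R) * e * ((w⁻¹ : Rˣ) : R))).Finite) :
    ∀ r : R, e * r = r * e := by
  intro r
  have h0 : e * (1 - e) = 0 := by rw [mul_sub, he, mul_one, sub_self]
  have h0' : (1 - e) * e = 0 := by rw [sub_mul, he, one_mul, sub_self]
  have he' : (1 - e) * (1 - e) = 1 - e := by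
    rw [sub_mul, one_mul, h0, sub_zero]
  have horb' : (Set.range (fun w : Rˣ => (w : R) * (1 - e) * ((w⁻¹ : Rˣ) : R))).Finite := by
    apply Set.Finite.subset (horb.image (fun s => 1 - s))
    rintro x ⟨w, rfl⟩
    refine ⟨(w : R) * e * ((w⁻¹ : Rˣ) : R), ⟨w, rfl⟩, ?_⟩
    show (1 : R) - (w : R) * e * ((w⁻¹ : Rˣ) : R) = (w : R) * (1 - e) * ((w⁻¹ : Rˣ) : R)
    rw [mul_sub, mul_one, sub_mul, Units.mul_inv]
  -- y-part
  have hy : (1 - e) * (r * e) = 0 := by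
    apply corner_vanish hH he horb
    · rw [← mul_assoc, h0, zero_mul]
    · rw [mul_assoc, mul_assoc, he]
  -- z-part
  have hz : e * (r * (1 - e)) = 0 := by
    apply corner_vanish hH he' horb'
    · rw [← mul_assoc, h0', zero_mul]
    · rw [mul_assoc, mul_assoc, he']
  have e1 : e * r = e * (r * e) + e * (r * (1 - e)) := by noncomm_ring
  have e2 : r * e = e * (r * e) + (1 - e) * (r * e) := by noncomm_ring
  calc e * r = e * (r * e) + e * (r * (1 - e)) := e1
    _ = e * (r * e) := by rw [hz, add_zero]
    _ = e * (r * e) + (1 - e) * (r * e) := by rw [hy, add_zero]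
    _ = r * e := e2.symm

end IdemCentral
section Fact1

variable {F : Type*} [Field F] {R : Type*} [Ring R] [Algebra F R]

lemma scalar_cancel {s : F} (hs : s ≠ 0) {t : R} (h : algebraMap F R s * t = 0) : t = 0 := by
  have := congrArg (fun q => algebraMap F R s⁻¹ * q) h
  simpa [← mul_assoc, ← map_mul, inv_mul_cancel₀ hs] using this

/-- Over an infinite field, a torsion unit commutes with every FC-unit. No ω-subgroup needed. -/
lemma fact1 [Infinite F] (x y : Rˣ)
    (hx : (unitCentralizer (x : R)).FiniteIndex) (hy' : IsOfFinOrder y) :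
    (x : R) * (y : R) = (y : R) * (x : R) := by
  obtain ⟨m, hm0, hym⟩ := isOfFinOrder_iff_pow_eq_one.mp hy'
  have hymR : ((y : R)) ^ m = 1 := by
    rw [← Units.val_pow_eq_pow_val, hym, Units.val_one]
  -- the set of admissible scalars
  have hroots : ({μ : F | μ ^ m = 1}).Finite := by
    have hp : (Polynomial.X ^ m - Polynomial.C (1 : F)) ≠ 0 :=
      Polynomial.X_pow_sub_C_ne_zero hm0 1
    apply Set.Finite.subset (Polynomial.finite_setOf_isRoot hp)
    intro μ hμ
    have hμ' : μ ^ m = 1 := hμ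
    simp only [Set.mem_setOf_eq, Polynomial.IsRoot, Polynomial.eval_sub, Polynomial.eval_pow,
      Polynomial.eval_X, Polynomial.eval_C]
    exact sub_eq_zero.mpr hμ'

  have hbad : ({lam : F | (-lam) ^ m = 1} ∪ {0}).Finite := by
    apply Set.Finite.union _ (Set.finite_singleton 0)
    have : {lam : F | (-lam) ^ m = 1} ⊆ (fun lam : F => -lam) ⁻¹' {μ : F | μ ^ m = 1} := by
      intro lam h; exact h
    exact Set.Finite.subset (hroots.preimage (fun a _ b _ hab => by simpa using hab)) this
  have hΛinf : ({lam : F | (-lam) ^ m = 1} ∪ {0} : Set F)ᶜ.Infinite := hbad.infinite_compl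
  have hΛprop : ∀ lam : F, lam ∈ ({lam : F | (-lam) ^ m = 1} ∪ {0} : Set F)ᶜ →
      lam ≠ 0 ∧ (-lam) ^ m ≠ 1 := by
    intro lam h
    constructor
    · intro h0; exact h (Or.inr h0)
    · intro h1; exact h (Or.inl h1)
  -- units 1 + lam • y
  have hWex : ∀ lam : F, lam ∈ ({lam : F | (-lam) ^ m = 1} ∪ {0} : Set F)ᶜ →
      IsUnit (1 + algebraMap F R lam * (y : R)) := by
    intro lam hmem
    obtain ⟨-, hlm⟩ := hΛprop lam hmem
    set u : R := algebraMap F R (-lam) * (y : R) with hudef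
    have hu1 : 1 + algebraMap F R lam * (y : R) = 1 - u := by
      rw [hudef, map_neg, neg_mul, sub_neg_eq_add]
    have hum : u ^ m = algebraMap F R ((-lam) ^ m) := by
      have hcM : Commute (algebraMap F R (-lam)) ((y : R)) := Algebra.commutes (-lam) ((y : R))
      rw [hudef, hcM.mul_pow, hymR, mul_one, ← map_pow]
    have hgeom1 : (1 - u) * (∑ i ∈ Finset.range m, u ^ i) = algebraMap F R (1 - (-lam) ^ m) := by
      have h := mul_geom_sum u m
      rw [map_sub, map_one, ← hum]
      rw [← neg_sub u 1, neg_mul, h, neg_sub]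
    have hgeom2 : (∑ i ∈ Finset.range m, u ^ i) * (1 - u) = algebraMap F R (1 - (-lam) ^ m) := by
      have h := geom_sum_mul u m
      rw [map_sub, map_one, ← hum]
      rw [← neg_sub u 1, mul_neg, h, neg_sub]
    have hs0 : (1 - (-lam) ^ m) ≠ 0 := sub_ne_zero.mpr (Ne.symm hlm)
    refine ⟨⟨1 - u, algebraMap F R (1 - (-lam) ^ m)⁻¹ * (∑ i ∈ Finset.range m, u ^ i), ?_, ?_⟩,
      hu1.symm⟩
    · calc (1 - u) * (algebraMap F R (1 - (-lam) ^ m)⁻¹ * (∑ i ∈ Finset.range m, u ^ i))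
          = algebraMap F R (1 - (-lam) ^ m)⁻¹ * ((1 - u) * (∑ i ∈ Finset.range m, u ^ i)) := by
            rw [← mul_assoc, ← Algebra.commutes, mul_assoc]
        _ = 1 := by rw [hgeom1, ← map_mul, inv_mul_cancel₀ hs0, map_one]
    · calc (algebraMap F R (1 - (-lam) ^ m)⁻¹ * (∑ i ∈ Finset.range m, u ^ i)) * (1 - u)
          = algebraMap F R (1 - (-lam) ^ m)⁻¹ * ((∑ i ∈ Finset.range m, u ^ i) * (1 - u)) := by
            rw [mul_assoc]
        _ = 1 := by rw [hgeom2, ← map_mul, inv_mul_cancel₀ hs0, map_one]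
  classical
  set Λ : Set F := ({lam : F | (-lam) ^ m = 1} ∪ {0} : Set F)ᶜ with hΛdef
  set W : F → Rˣ := fun lam => if h : lam ∈ Λ then (hWex lam h).unit else 1 with hWdef
  have hWval : ∀ lam : F, lam ∈ Λ → ((W lam : Rˣ) : R) = 1 + algebraMap F R lam * (y : R) := by
    intro lam h; simp only [hWdef, dif_pos h]; exact (hWex lam h).unit_spec
  -- pigeonhole over Λ
  have him : ((fun lam : F => ((W lam : Rˣ) : R) * (x : R) * (((W lam)⁻¹ : Rˣ) : R)) '' Λ).Finite := by
    apply Set.Finite.subset (orbit_finite_of_finiteIndex hx)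
    rintro t ⟨lam, _, rfl⟩
    exact ⟨W lam, rfl⟩
  obtain ⟨t, hfib⟩ := exists_infinite_fiber' hΛinf _ him
  obtain ⟨lam, hlam⟩ := hfib.nonempty
  obtain ⟨mu, hmu⟩ := (hfib.diff (Set.finite_singleton lam)).nonempty
  have hne : mu ≠ lam := by
    intro h; exact hmu.2 (by simp [h])
  have hlamΛ : lam ∈ Λ := hlam.1
  have hmuΛ : mu ∈ Λ := hmu.1.1
  -- from equal conjugates, (W mu)⁻¹ * (W lam) commutes with x
  have hd := conj_comm_of_eq (hlam.2.trans hmu.1.2.symm)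
  rw [Units.val_mul] at hd
  -- affine splitting of W lam in terms of W mu
  have hmu0 : mu ≠ 0 := (hΛprop mu hmuΛ).1
  set cc : F := lam * mu⁻¹ with hccdef
  have hcc1 : cc ≠ 1 := by
    intro h
    apply hne
    have := congrArg (fun s => s * mu) h
    simpa [hccdef, mul_assoc, inv_mul_cancel₀ hmu0] using this.symm
  have hsplit : ((W lam : Rˣ) : R)
      = algebraMap F R cc * ((W mu : Rˣ) : R) + algebraMap F R (1 - cc) := by
    rw [hWval lam hlamΛ, hWval mu hmuΛ]
    rw [mul_add, mul_one, ← mul_assoc, ← map_mul, map_sub, map_one]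
    have : cc * mu = lam := by
      rw [hccdef, mul_assoc, inv_mul_cancel₀ hmu0, mul_one]
    rw [this]
    abel
  have hq : (((W mu)⁻¹ : Rˣ) : R) * (x : R) = (x : R) * (((W mu)⁻¹ : Rˣ) : R) := by
    -- substitute the splitting into hd and cancel the scalar
    have e1 : (((W mu)⁻¹ : Rˣ) : R) * ((W lam : Rˣ) : R)
        = algebraMap F R cc + algebraMap F R (1 - cc) * (((W mu)⁻¹ : Rˣ) : R) := by
      rw [hsplit, mul_add]
      congr 1
      · rw [Algebra.commutes cc ((W mu : Rˣ) : R), Units.inv_mul_cancel_left]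
      · exact (Algebra.commutes (1 - cc) _).symm
    rw [e1] at hd
    have e2 : algebraMap F R (1 - cc) * ((((W mu)⁻¹ : Rˣ) : R) * (x : R))
        = algebraMap F R (1 - cc) * ((x : R) * (((W mu)⁻¹ : Rˣ) : R)) := by
      have lhs : (algebraMap F R cc + algebraMap F R (1 - cc) * (((W mu)⁻¹ : Rˣ) : R)) * (x : R)
          = algebraMap F R cc * (x : R)
            + algebraMap F R (1 - cc) * ((((W mu)⁻¹ : Rˣ) : R) * (x : R)) := by
        rw [add_mul, mul_assoc]
      have rhs : (x : R) * (algebraMap F R cc + algebraMap F R (1 - cc) * (((W mu)⁻¹ : Rˣ) : R))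
          = algebraMap F R cc * (x : R)
            + algebraMap F R (1 - cc) * ((x : R) * (((W mu)⁻¹ : Rˣ) : R)) := by
        rw [mul_add, ← Algebra.commutes cc, ← mul_assoc, ← Algebra.commutes (1 - cc), mul_assoc]
      rw [lhs, rhs] at hd
      exact add_left_cancel hd
    have e3 : algebraMap F R (1 - cc) *
        ((((W mu)⁻¹ : Rˣ) : R) * (x : R) - (x : R) * (((W mu)⁻¹ : Rˣ) : R)) = 0 := by
      rw [mul_sub, e2, sub_self]
    have := scalar_cancel (sub_ne_zero.mpr (Ne.symm hcc1)) e3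
    rwa [sub_eq_zero] at this
  have hWcx : ((W mu : Rˣ) : R) * (x : R) = (x : R) * ((W mu : Rˣ) : R) := by
    have := unit_inv_comm ((W mu)⁻¹) (x : R) hq
    simpa using this
  -- extract commutation of x and y
  rw [hWval mu hmuΛ] at hWcx
  have e4 : algebraMap F R mu * ((y : R) * (x : R)) = algebraMap F R mu * ((x : R) * (y : R)) := by
    have lhs : (1 + algebraMap F R mu * (y : R)) * (x : R)
        = (x : R) + algebraMap F R mu * ((y : R) * (x : R)) := by
      rw [add_mul, one_mul, mul_assoc]
    have rhs : (x : R) * (1 + algebraMap F R mu * (y : R))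
        = (x : R) + algebraMap F R mu * ((x : R) * (y : R)) := by
      rw [mul_add, mul_one, ← mul_assoc, ← Algebra.commutes mu, mul_assoc]
    rw [lhs, rhs] at hWcx
    exact add_left_cancel hWcx
  have e5 : algebraMap F R mu * ((y : R) * (x : R) - (x : R) * (y : R)) = 0 := by
    rw [mul_sub, e4, sub_self]
  have := scalar_cancel hmu0 e5
  rw [sub_eq_zero] at this
  exact this.symm

end Fact1
section Dietzmann

variable {G : Type*} [Group G]

open List in
lemma extract_letter [DecidableEq G] {X : Set G} (hconj : ∀ g ∈ X, ∀ w : G, w * g * w⁻¹ ∈ X)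
    (x : G) : ∀ l : List G, (∀ g ∈ l, g ∈ X) →
    ∃ l' : List G, (∀ g ∈ l', g ∈ X) ∧ l'.length + l.count x = l.length ∧
      l.prod = x ^ (l.count x) * l'.prod := by
  intro l
  induction l with
  | nil => exact fun _ => ⟨[], by simp, by simp, by simp⟩
  | cons a t ih =>
    intro hmem
    obtain ⟨l', h1, h2, h3⟩ := ih (fun g hg => hmem g (List.mem_cons_of_mem a hg))
    by_cases hax : a = x
    · subst hax
      refine ⟨l', h1, ?_, ?_⟩
      · rw [List.count_cons_self, List.length_cons]
        omega
      · rw [List.prod_cons, List.count_cons_self, h3, pow_succ', mul_assoc]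
    · refine ⟨((x ^ (t.count x))⁻¹ * a * (x ^ (t.count x))) :: l', ?_, ?_, ?_⟩
      · intro g hg
        rcases List.mem_cons.mp hg with rfl | hg
        · have := hconj a (hmem a List.mem_cons_self) (x ^ t.count x)⁻¹
          simpa using this
        · exact h1 g hg
      · rw [List.count_cons_of_ne hax, List.length_cons, List.length_cons]
        omega
      · rw [List.prod_cons, List.prod_cons, h3, List.count_cons_of_ne hax]
        group

lemma exists_short_word [DecidableEq G] {X : Set G} (hXfin : X.Finite)
    (hconj : ∀ g ∈ X, ∀ w : G, w * g * w⁻¹ ∈ X) (N : G → ℕ)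
    (hN : ∀ g ∈ X, 0 < N g ∧ g ^ N g = 1) :
    ∀ (n : ℕ) (l : List G), l.length ≤ n → (∀ g ∈ l, g ∈ X) →
      ∃ l' : List G, (∀ g ∈ l', g ∈ X) ∧ l'.length ≤ hXfin.toFinset.sum N ∧ l'.prod = l.prod := by
  intro n
  induction n with
  | zero =>
    intro l hlen hmem
    refine ⟨l, hmem, ?_, rfl⟩
    omega
  | succ n ih =>
    intro l hlen hmem
    by_cases hsmall : l.length ≤ hXfin.toFinset.sum N
    · exact ⟨l, hmem, hsmall, rfl⟩
    · have hsub : l.toFinset ⊆ hXfin.toFinset := by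
        intro g hg
        exact hXfin.mem_toFinset.mpr (hmem g (List.mem_toFinset.mp hg))
      have hlensum : ∑ g ∈ l.toFinset, l.count g = l.length := by
        have h := Multiset.toFinset_sum_count_eq (l : Multiset G)
        simpa using h
      have hex : ∃ x ∈ l.toFinset, N x ≤ l.count x := by
        by_contra hcon
        push_neg at hcon
        apply hsmall
        calc l.length = ∑ g ∈ l.toFinset, l.count g := hlensum.symm
          _ ≤ ∑ g ∈ l.toFinset, N g := Finset.sum_le_sum (fun g hg => le_of_lt (hcon g hg))
          _ ≤ hXfin.toFinset.sum N := Finset.sum_le_sum_of_subset hsub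
      obtain ⟨x, hxl, hxcount⟩ := hex
      obtain ⟨l', h1, h2, h3⟩ := extract_letter hconj x l hmem
      obtain ⟨hN0, hNx⟩ := hN x (hmem x (List.mem_toFinset.mp hxl))
      have hmem' : ∀ g ∈ (List.replicate (l.count x - N x) x ++ l'), g ∈ X := by
        intro g hg
        rcases List.mem_append.mp hg with hg | hg
        · rw [(List.mem_replicate.mp hg).2]
          exact hmem x (List.mem_toFinset.mp hxl)
        · exact h1 g hg
      have hlen' : (List.replicate (l.count x - N x) x ++ l').length ≤ n := by
        rw [List.length_append, List.length_replicate]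
        omega
      obtain ⟨l'', k1, k2, k3⟩ := ih _ hlen' hmem'
      refine ⟨l'', k1, k2, k3.trans ?_⟩
      rw [List.prod_append, List.prod_replicate, h3]
      have hxpow : x ^ (l.count x) = x ^ (l.count x - N x) := by
        conv_lhs => rw [show l.count x = N x + (l.count x - N x) by omega]
        rw [pow_add, hNx, one_mul]
      rw [hxpow]

/-- Dietzmann's lemma: a finite, conjugation-closed set of torsion elements generates
a finite subgroup. -/
lemma dietzmann {X : Set G} (hXfin : X.Finite)
    (hconj : ∀ g ∈ X, ∀ w : G, w * g * w⁻¹ ∈ X)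
    (htor : ∀ g ∈ X, ∃ n, 0 < n ∧ g ^ n = 1) :
    ((Subgroup.closure X : Subgroup G) : Set G).Finite := by
  classical
  set N : G → ℕ := fun g => if h : g ∈ X then (htor g h).choose else 1 with hNdef
  have hN : ∀ g ∈ X, 0 < N g ∧ g ^ N g = 1 := by
    intro g hg
    simp only [hNdef, dif_pos hg]
    exact (htor g hg).choose_spec
  -- words
  set WS : Set G := {g | ∃ l : List G, (∀ a ∈ l, a ∈ X) ∧ l.prod = g} with hWSdef
  have hWmul : ∀ g h : G, g ∈ WS → h ∈ WS → g * h ∈ WS := by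
    rintro g h ⟨l₁, hm₁, rfl⟩ ⟨l₂, hm₂, rfl⟩
    refine ⟨l₁ ++ l₂, ?_, List.prod_append⟩
    intro a ha
    rcases List.mem_append.mp ha with ha | ha
    · exact hm₁ a ha
    · exact hm₂ a ha
  have hWsingleinv : ∀ a : G, a ∈ X → a⁻¹ ∈ WS := by
    intro a ha
    obtain ⟨hpos, hNa⟩ := hN a ha
    refine ⟨List.replicate (N a - 1) a, ?_, ?_⟩
    · intro g hg; rw [(List.mem_replicate.mp hg).2]; exact ha
    · rw [List.prod_replicate]
      symm
      apply inv_eq_of_mul_eq_one_right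
      rw [← pow_succ', Nat.sub_add_cancel hpos]
      exact hNa
  have hWinv : ∀ l : List G, (∀ a ∈ l, a ∈ X) → (l.prod)⁻¹ ∈ WS := by
    intro l
    induction l with
    | nil => intro _; exact ⟨[], by simp, by simp⟩
    | cons a t ih =>
      intro hmem
      rw [List.prod_cons, mul_inv_rev]
      exact hWmul _ _ (ih (fun g hg => hmem g (List.mem_cons_of_mem a hg)))
        (hWsingleinv a (hmem a List.mem_cons_self))
  have hclosure : ((Subgroup.closure X : Subgroup G) : Set G) ⊆ WS := by
    intro g hg
    induction hg using Subgroup.closure_induction with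
    | mem g hgX => exact ⟨[g], by simpa using hgX, by simp⟩
    | one => exact ⟨[], by simp, by simp⟩
    | mul g h _ _ hgW hhW => exact hWmul g h hgW hhW
    | inv g _ hgW =>
      obtain ⟨l, hm, rfl⟩ := hgW
      exact hWinv l hm
  -- bounded-length products are finite
  have hbdd : ∀ L : ℕ, {g : G | ∃ l : List G, (∀ a ∈ l, a ∈ X) ∧ l.length ≤ L ∧ l.prod = g}.Finite := by
    intro L
    induction L with
    | zero =>
      apply Set.Finite.subset (Set.finite_singleton 1)
      rintro g ⟨l, _, hlen, rfl⟩
      rw [List.length_eq_zero_iff.mp (Nat.le_zero.mp hlen)]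
      simp
    | succ L ih =>
      apply Set.Finite.subset (ih.union (hXfin.biUnion (fun x _ => ih.image (fun g => x * g))))
      rintro g ⟨l, hm, hlen, rfl⟩
      cases l with
      | nil =>
        left
        exact ⟨[], by simp, by simp, rfl⟩
      | cons a t =>
        right
        apply Set.mem_biUnion (hm a List.mem_cons_self)
        refine ⟨t.prod, ⟨t, fun g hg => hm g (List.mem_cons_of_mem a hg), ?_, rfl⟩, ?_⟩
        · have := hlen; rw [List.length_cons] at this; omega
        · rw [List.prod_cons]
  apply Set.Finite.subset (hbdd (hXfin.toFinset.sum N))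
  intro g hg
  obtain ⟨l, hm, rfl⟩ := hclosure hg
  obtain ⟨l', k1, k2, k3⟩ := exists_short_word hXfin hconj N hN l.length l le_rfl hm
  exact ⟨l', k1, k2, k3⟩

end Dietzmann
section FiniteRingTools

universe u

lemma exists_pow_idem {B : Type*} [Monoid B] [Finite B] (a : B) :
    ∃ n : ℕ, 0 < n ∧ a ^ n * a ^ n = a ^ n := by
  have key : ∀ i j : ℕ, i < j → a ^ i = a ^ j → ∃ n : ℕ, 0 < n ∧ a ^ n * a ^ n = a ^ n := by
    intro i j hlt he
    have hd1 : 1 ≤ j - i := by omega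
    have step : ∀ s, i ≤ s → a ^ (s + (j - i)) = a ^ s := by
      intro s hs
      have e1 : a ^ (s + (j - i)) = a ^ (s - i) * a ^ j := by
        rw [← pow_add]
        congr 1
        omega
      rw [e1, ← he, ← pow_add]
      congr 1
      omega
    have iter : ∀ k s, i ≤ s → a ^ (s + k * (j - i)) = a ^ s := by
      intro k
      induction k with
      | zero => intro s _; simp
      | succ k ih =>
        intro s hs
        have e1 : s + (k + 1) * (j - i) = (s + k * (j - i)) + (j - i) := by ring
        rw [e1, step _ (le_trans hs (Nat.le_add_right _ _)), ih s hs]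
    refine ⟨(j - i) * (i + 1), by positivity, ?_⟩
    rw [← pow_add]
    have e2 : (j - i) * (i + 1) + (j - i) * (i + 1) = ((j - i) * (i + 1)) + (i + 1) * (j - i) := by
      ring
    rw [e2, iter (i + 1) ((j - i) * (i + 1)) ?_]
    calc i ≤ i + 1 := Nat.le_succ i
      _ = 1 * (i + 1) := (one_mul _).symm
      _ ≤ (j - i) * (i + 1) := Nat.mul_le_mul_right _ hd1
  obtain ⟨i, j, hne, heq⟩ := Finite.exists_ne_map_eq_of_infinite (fun n : ℕ => a ^ n)
  rcases Nat.lt_or_ge i j with hlt | hge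
  · exact key i j hlt heq
  · exact key j i (by omega) heq.symm

lemma pow_mul_pow_eq_one' {B : Type*} [Monoid B] {a b : B} (h : a * b = 1) :
    ∀ n : ℕ, a ^ n * b ^ n = 1 := by
  intro n
  induction n with
  | zero => simp
  | succ n ih =>
    rw [pow_succ', pow_succ, mul_assoc, ← mul_assoc (a ^ n), ih, one_mul, h]

lemma not_isNilpotent_of_isUnit {B : Type*} [Ring B] [Nontrivial B] {a : B}
    (hu : IsUnit a) : ¬IsNilpotent a := by
  rintro ⟨n, hn⟩
  have : IsUnit ((0 : B)) := by rw [← hn]; exact hu.pow n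
  exact zero_ne_one (isUnit_zero_iff.mp this)

variable {B : Type u} [Ring B] [Finite B]

lemma nilp_or_unit (hid0 : ∀ e : B, e * e = e → e = 0 ∨ e = 1) (a : B) :
    IsNilpotent a ∨ IsUnit a := by
  obtain ⟨n, hn0, hidem⟩ := exists_pow_idem a
  rcases hid0 _ hidem with h | h
  · exact Or.inl ⟨n, h⟩
  · refine Or.inr ⟨⟨a, a ^ (n - 1), ?_, ?_⟩, rfl⟩
    · rw [← pow_succ', Nat.sub_add_cancel hn0, h]
    · rw [← pow_succ, Nat.sub_add_cancel hn0, h]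

lemma Nmul_left [Nontrivial B] (hid0 : ∀ e : B, e * e = e → e = 0 ∨ e = 1)
    {a : B} (ha : IsNilpotent a) (r : B) : IsNilpotent (r * a) := by
  by_contra hcon
  have hu : IsUnit (r * a) := (nilp_or_unit hid0 _).resolve_left hcon
  set u := hu.unit with hudef
  have huval : (u : B) = r * a := hu.unit_spec
  have hf : (a * ↑u⁻¹ * r) * (a * ↑u⁻¹ * r) = a * ↑u⁻¹ * r := by
    calc (a * ↑u⁻¹ * r) * (a * ↑u⁻¹ * r)
        = a * ↑u⁻¹ * ((r * a) * (↑u⁻¹ * r)) := by simp only [mul_assoc]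
      _ = a * ↑u⁻¹ * ((u : B) * (↑u⁻¹ * r)) := by rw [← huval]
      _ = a * ↑u⁻¹ * r := by rw [Units.mul_inv_cancel_left]
  rcases hid0 _ hf with hf0 | hf1
  · have ha0 : a = 0 := by
      have e1 : a = (a * ↑u⁻¹ * r) * a := by
        calc a = a * (↑u⁻¹ * ↑u) := by simp
          _ = a * (↑u⁻¹ * (r * a)) := by rw [← huval]
          _ = (a * ↑u⁻¹ * r) * a := by simp only [mul_assoc]
      rw [hf0, zero_mul] at e1
      exact e1
    rw [ha0, mul_zero] at hu
    exact zero_ne_one (isUnit_zero_iff.mp hu)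
  · have e2 : a * (↑u⁻¹ * r) = 1 := by rw [← mul_assoc]; exact hf1
    obtain ⟨n, hn⟩ := ha
    have := pow_mul_pow_eq_one' e2 n
    rw [hn, zero_mul] at this
    exact zero_ne_one this

lemma Nmul_right [Nontrivial B] (hid0 : ∀ e : B, e * e = e → e = 0 ∨ e = 1)
    {a : B} (ha : IsNilpotent a) (r : B) : IsNilpotent (a * r) := by
  by_contra hcon
  have hu : IsUnit (a * r) := (nilp_or_unit hid0 _).resolve_left hcon
  set u := hu.unit with hudef
  have huval : (u : B) = a * r := hu.unit_spec
  have hf : (r * ↑u⁻¹ * a) * (r * ↑u⁻¹ * a) = r * ↑u⁻¹ * a := by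
    calc (r * ↑u⁻¹ * a) * (r * ↑u⁻¹ * a)
        = r * ↑u⁻¹ * ((a * r) * (↑u⁻¹ * a)) := by simp only [mul_assoc]
      _ = r * ↑u⁻¹ * ((u : B) * (↑u⁻¹ * a)) := by rw [← huval]
      _ = r * ↑u⁻¹ * a := by rw [Units.mul_inv_cancel_left]
  rcases hid0 _ hf with hf0 | hf1
  · have ha0 : a = 0 := by
      have e1 : a = a * (r * ↑u⁻¹ * a) := by
        calc a = (↑u * ↑u⁻¹) * a := by simp
          _ = ((a * r) * ↑u⁻¹) * a := by rw [← huval]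
          _ = a * (r * ↑u⁻¹ * a) := by simp only [mul_assoc]
      rw [hf0, mul_zero] at e1
      exact e1
    rw [ha0, zero_mul] at hu
    exact zero_ne_one (isUnit_zero_iff.mp hu)
  · have e2 : (r * ↑u⁻¹) * a = 1 := hf1
    obtain ⟨n, hn⟩ := ha
    have := pow_mul_pow_eq_one' e2 n
    rw [hn, mul_zero] at this
    exact zero_ne_one this

lemma Nadd [Nontrivial B] (hid0 : ∀ e : B, e * e = e → e = 0 ∨ e = 1)
    {a b : B} (ha : IsNilpotent a) (hb : IsNilpotent b) : IsNilpotent (a + b) := by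
  rcases nilp_or_unit hid0 (a + b) with h | h
  · exact h
  · exfalso
    set u := h.unit with hudef
    have huval : (u : B) = a + b := h.unit_spec
    have hx : IsNilpotent ((↑u⁻¹ : B) * a) := Nmul_left hid0 ha _
    have hy : IsNilpotent ((↑u⁻¹ : B) * b) := Nmul_left hid0 hb _
    have hsum : (↑u⁻¹ : B) * a + (↑u⁻¹ : B) * b = 1 := by
      rw [← mul_add, ← huval, Units.inv_mul]
    have h1u : IsUnit ((1 : B) - ↑u⁻¹ * a) := hx.isUnit_one_sub
    have e1 : (1 : B) - ↑u⁻¹ * a = ↑u⁻¹ * b := by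
      rw [← hsum]; abel
    rw [e1] at h1u
    exact not_isNilpotent_of_isUnit h1u hy

/-- Surjective non-injective map strictly decreases cardinality. -/
lemma card_lt_of_quot {α β : Type*} [Finite α] (f : α → β) (hs : Function.Surjective f)
    {x y : α} (hxy : x ≠ y) (hf : f x = f y) : Nat.card β < Nat.card α := by
  haveI : Finite β := Finite.of_surjective f hs
  cases nonempty_fintype α
  cases nonempty_fintype β
  rw [Nat.card_eq_fintype_card, Nat.card_eq_fintype_card]
  exact Fintype.card_lt_of_surjective_not_injective f hs (fun hinj => hxy (hinj hf))

end FiniteRingTools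
section KeyFin

universe u

/-- The congruence `a ~ b ↔ e*a = e*b` for a central idempotent-ish element `e`. -/
def eCon {B : Type u} [Ring B] (e : B) (hc : ∀ x : B, e * x = x * e) : RingCon B where
  r a b := e * a = e * b
  iseqv := ⟨fun _ => rfl, fun h => h.symm, fun h1 h2 => h1.trans h2⟩
  mul' := by
    intro a b c d h1 h2
    have h1' : e * a = e * b := h1
    have h2' : e * c = e * d := h2
    show e * (a * c) = e * (b * d)
    calc e * (a * c) = (e * a) * c := by rw [mul_assoc]
      _ = (e * b) * c := by rw [h1']
      _ = b * (e * c) := by rw [← mul_assoc, hc b, mul_assoc]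
      _ = b * (e * d) := by rw [h2']
      _ = e * (b * d) := by rw [← mul_assoc, ← hc b, mul_assoc]
  add' := by
    intro a b c d h1 h2
    have h1' : e * a = e * b := h1
    have h2' : e * c = e * d := h2
    show e * (a + c) = e * (b + d)
    rw [mul_add, mul_add, h1', h2']

lemma eCon_rel {B : Type u} [Ring B] (e : B) (hc : ∀ x : B, e * x = x * e) (a b : B) :
    (eCon e hc) a b ↔ e * a = e * b := Iff.rfl

/-- The congruence `a ~ b ↔ a - b` nilpotent, on a finite ring with only trivial idempotents. -/
def nilCon {B : Type u} [Ring B] [Finite B] [Nontrivial B]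
    (hid0 : ∀ e : B, e * e = e → e = 0 ∨ e = 1) : RingCon B where
  r a b := IsNilpotent (a - b)
  iseqv := by
    refine ⟨fun a => ⟨1, by simp⟩, fun h => ?_, fun h1 h2 => ?_⟩
    · rw [← neg_sub]; exact h.neg
    · have := Nadd hid0 h1 h2
      rwa [sub_add_sub_cancel] at this
  mul' := by
    intro a b c d h1 h2
    have h1' : IsNilpotent (a - b) := h1
    have h2' : IsNilpotent (c - d) := h2
    show IsNilpotent (a * c - b * d)
    have e1 : a * c - b * d = a * (c - d) + (a - b) * d := by noncomm_ring
    rw [e1]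
    exact Nadd hid0 (Nmul_left hid0 h2' a) (Nmul_right hid0 h1' d)
  add' := by
    intro a b c d h1 h2
    have h1' : IsNilpotent (a - b) := h1
    have h2' : IsNilpotent (c - d) := h2
    show IsNilpotent (a + c - (b + d))
    have e1 : a + c - (b + d) = (a - b) + (c - d) := by abel
    rw [e1]
    exact Nadd hid0 h1' h2'

lemma nilCon_rel {B : Type u} [Ring B] [Finite B] [Nontrivial B]
    (hid0 : ∀ e : B, e * e = e → e = 0 ∨ e = 1) (a b : B) :
    (nilCon hid0) a b ↔ IsNilpotent (a - b) := Iff.rfl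

/-- MAIN finite-ring lemma: in a finite ring all of whose idempotents are central,
every multiplicative commutator of units is unipotent. -/
theorem keyFin : ∀ (n : ℕ) (B : Type u) [Ring B] [Finite B], Nat.card B ≤ n →
    (∀ e : B, e * e = e → ∀ x : B, e * x = x * e) →
    ∀ g h : Bˣ, IsNilpotent ((↑(g * h * g⁻¹ * h⁻¹) : B) - 1) := by
  intro n
  induction n with
  | zero =>
    intro B _ _ hcard _ _ _
    exfalso
    have : 0 < Nat.card B := Nat.card_pos
    omega
  | succ n ih =>
    intro B _ _ hcard hcent g h
    by_cases htriv : (0 : B) = 1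
    · haveI : Subsingleton B := subsingleton_of_zero_eq_one htriv
      exact ⟨1, by rw [pow_one]; exact Subsingleton.elim _ _⟩
    haveI : Nontrivial B := nontrivial_of_ne 0 1 htriv
    by_cases hex : ∃ e : B, (e * e = e) ∧ e ≠ 0 ∧ e ≠ 1
    · obtain ⟨e, he, he0, he1⟩ := hex
      have main : ∀ f : B, f * f = f → f ≠ 1 →
          ∃ N : ℕ, f * ((↑(g * h * g⁻¹ * h⁻¹) : B) - 1) ^ N = 0 := by
        intro f hff hf1
        have hfc : ∀ x : B, f * x = x * f := hcent f hff
        set c := eCon f hfc with hcdef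
        have hsurj : Function.Surjective (fun b : B => (b : c.Quotient)) :=
          fun q => Quot.inductionOn q fun b => ⟨b, rfl⟩
        haveI : Finite c.Quotient := Finite.of_surjective _ hsurj
        have hne10 : (1 : B) - f ≠ 0 := fun hcon => hf1 (by
          have := congrArg (fun t => t + f) hcon
          simpa using this.symm)
        have hrel : ((1 - f : B) : c.Quotient) = ((0 : B) : c.Quotient) := by
          rw [RingCon.eq]
          show f * (1 - f) = f * 0
          rw [mul_sub, mul_one, hff, sub_self, mul_zero]
        have hcQ : Nat.card c.Quotient < Nat.card B :=
          card_lt_of_quot _ hsurj hne10 hrel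
        have hidQ : ∀ eb : c.Quotient, eb * eb = eb → ∀ xx : c.Quotient, eb * xx = xx * eb := by
          intro eb heb xx
          obtain ⟨x, rfl⟩ : ∃ x : B, (x : c.Quotient) = eb :=
            Quot.inductionOn eb fun b => ⟨b, rfl⟩
          obtain ⟨t, rfl⟩ : ∃ t : B, (t : c.Quotient) = xx :=
            Quot.inductionOn xx fun b => ⟨b, rfl⟩
          have heb' : f * (x * x) = f * x := by
            have h' : ((x * x : B) : c.Quotient) = ((x : B) : c.Quotient) := by
              rw [RingCon.coe_mul]; exact heb
            exact (RingCon.eq c).mp h' 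
          set z := f * x with hzdef
          have hz : z * z = z := by
            calc z * z = f * ((x * f) * x) := by simp only [hzdef, mul_assoc]
              _ = f * ((f * x) * x) := by rw [← hfc x]
              _ = (f * f) * (x * x) := by simp only [mul_assoc]
              _ = f * x := by rw [hff, heb']
          have hzc := hcent z hz
          show ((x * t : B) : c.Quotient) = ((t * x : B) : c.Quotient)
          rw [RingCon.eq]
          show f * (x * t) = f * (t * x)
          calc f * (x * t) = (f * x) * t := by rw [mul_assoc]
            _ = t * (f * x) := hzc t
            _ = (t * f) * x := by rw [mul_assoc]
            _ = (f * t) * x := by rw [← hfc t]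
            _ = f * (t * x) := by rw [mul_assoc]
        set φ : B →* c.Quotient := (c.mk' : B →+* c.Quotient).toMonoidHom with hφdef
        obtain ⟨N, hN⟩ := ih c.Quotient (by omega) hidQ (Units.map φ g) (Units.map φ h)
        refine ⟨N, ?_⟩
        have hmapcomm : Units.map φ g * Units.map φ h * (Units.map φ g)⁻¹ * (Units.map φ h)⁻¹
            = Units.map φ (g * h * g⁻¹ * h⁻¹) := by
          rw [map_mul, map_mul, map_mul, map_inv, map_inv]
        rw [hmapcomm, Units.coe_map] at hN
        have hN' : (c.mk' (((↑(g * h * g⁻¹ * h⁻¹) : B) - 1))) ^ N = 0 := by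
          rw [map_sub, map_one]
          exact hN
        rw [← map_pow] at hN'
        rw [show (0 : c.Quotient) = c.mk' 0 from (map_zero (c.mk')).symm] at hN'
        have hrel' : f * ((↑(g * h * g⁻¹ * h⁻¹) : B) - 1) ^ N = f * 0 := (RingCon.eq c).mp hN'
        rwa [mul_zero] at hrel'
      obtain ⟨N1, h1⟩ := main e he he1
      have he'idem : (1 - e) * (1 - e) = 1 - e := by
        rw [sub_mul, one_mul, mul_sub, mul_one, he]
        abel
      have he'ne : (1 - e) ≠ 1 := by
        intro hcon
        apply he0
        have := congrArg (fun t => (1 : B) - t) hcon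
        simpa using this
      obtain ⟨N2, h2⟩ := main (1 - e) he'idem he'ne
      refine ⟨N1 + N2, ?_⟩
      have hsplit : ((↑(g * h * g⁻¹ * h⁻¹) : B) - 1) ^ (N1 + N2)
          = e * ((↑(g * h * g⁻¹ * h⁻¹) : B) - 1) ^ (N1 + N2)
            + (1 - e) * ((↑(g * h * g⁻¹ * h⁻¹) : B) - 1) ^ (N1 + N2) := by
        rw [← add_mul]
        have : e + (1 - e) = 1 := by abel
        rw [this, one_mul]
      have t1 : e * ((↑(g * h * g⁻¹ * h⁻¹) : B) - 1) ^ (N1 + N2) = 0 := by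
        rw [pow_add, ← mul_assoc, h1, zero_mul]
      have t2 : (1 - e) * ((↑(g * h * g⁻¹ * h⁻¹) : B) - 1) ^ (N1 + N2) = 0 := by
        rw [show N1 + N2 = N2 + N1 by omega, pow_add, ← mul_assoc, h2, zero_mul]
      rw [hsplit, t1, t2, add_zero]
    · -- base case: only trivial idempotents
      have hid0 : ∀ e : B, e * e = e → e = 0 ∨ e = 1 := by
        intro e he
        by_contra hcon
        push_neg at hcon
        exact hex ⟨e, he, hcon.1, hcon.2⟩
      set c := nilCon hid0 with hcdef
      have hsurj : Function.Surjective (fun b : B => (b : c.Quotient)) :=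
        fun q => Quot.inductionOn q fun b => ⟨b, rfl⟩
      haveI : Finite c.Quotient := Finite.of_surjective _ hsurj
      haveI : Nontrivial c.Quotient := by
        refine ⟨((0 : B) : c.Quotient), ((1 : B) : c.Quotient), ?_⟩
        intro hcon
        rw [RingCon.eq] at hcon
        have hnil : IsNilpotent ((0 : B) - 1) := hcon
        rw [zero_sub] at hnil
        exact not_isNilpotent_of_isUnit isUnit_one.neg hnil
      haveI : NoZeroDivisors c.Quotient := by
        refine ⟨?_⟩
        intro a b hab
        obtain ⟨x, rfl⟩ : ∃ x : B, (x : c.Quotient) = a :=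
          Quot.inductionOn a fun b => ⟨b, rfl⟩
        obtain ⟨t, rfl⟩ : ∃ t : B, (t : c.Quotient) = b :=
          Quot.inductionOn b fun b => ⟨b, rfl⟩
        by_contra hcon
        push_neg at hcon
        obtain ⟨hx0, ht0⟩ := hcon
        have hxnil : ¬IsNilpotent x := by
          intro hnil
          apply hx0
          have h' : ((x : B) : c.Quotient) = ((0 : B) : c.Quotient) := by
            refine (RingCon.eq c).mpr ?_
            show IsNilpotent (x - 0)
            rwa [sub_zero]
          simpa using h'
        have htnil : ¬IsNilpotent t := by
          intro hnil
          apply ht0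
          have h' : ((t : B) : c.Quotient) = ((0 : B) : c.Quotient) := by
            refine (RingCon.eq c).mpr ?_
            show IsNilpotent (t - 0)
            rwa [sub_zero]
          simpa using h' 
        have hxu : IsUnit x := (nilp_or_unit hid0 x).resolve_left hxnil
        have htu : IsUnit t := (nilp_or_unit hid0 t).resolve_left htnil
        have hprod : ((x * t : B) : c.Quotient) = ((0 : B) : c.Quotient) := by
          exact_mod_cast hab
        rw [RingCon.eq] at hprod
        have : IsNilpotent (x * t - 0) := hprod
        rw [sub_zero] at this
        exact not_isNilpotent_of_isUnit (hxu.mul htu) this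
      haveI : IsDomain c.Quotient := NoZeroDivisors.to_isDomain _
      have hcomm : ∀ p q : c.Quotient, p * q = q * p :=
        (Finite.isDomain_to_isField c.Quotient).mul_comm
      -- the commutator maps to 1
      have hkey : ∀ (a b a' b' : c.Quotient), a * a' = 1 → b * b' = 1 →
          a * b * a' * b' = 1 := by
        intro a b a' b' ha hb
        calc a * b * a' * b' = a * (b * a') * b' := by rw [mul_assoc a b a']
          _ = a * (a' * b) * b' := by rw [hcomm b a']
          _ = (a * a') * (b * b') := by rw [← mul_assoc a a' b, mul_assoc (a * a') b b']
          _ = 1 := by rw [ha, hb, one_mul]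
      have hgg : ((↑g : B) : c.Quotient) * ((↑g⁻¹ : B) : c.Quotient) = 1 := by
        rw [← RingCon.coe_mul, ← Units.val_mul, mul_inv_cancel, Units.val_one, RingCon.coe_one]
      have hhh : ((↑h : B) : c.Quotient) * ((↑h⁻¹ : B) : c.Quotient) = 1 := by
        rw [← RingCon.coe_mul, ← Units.val_mul, mul_inv_cancel, Units.val_one, RingCon.coe_one]
      have hXone : ((↑(g * h * g⁻¹ * h⁻¹) : B) : c.Quotient) = ((1 : B) : c.Quotient) := by
        rw [Units.val_mul, Units.val_mul, Units.val_mul]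
        rw [RingCon.coe_mul, RingCon.coe_mul, RingCon.coe_mul]
        rw [RingCon.coe_one]
        exact hkey _ _ _ _ hgg hhh
      rw [RingCon.eq] at hXone
      have : IsNilpotent ((↑(g * h * g⁻¹ * h⁻¹) : B) - 1) := hXone
      exact this

end KeyFin
section FiniteFieldCase

open Pointwise

variable {R : Type*} [Ring R]

lemma unit_orbit_finite {a : Rˣ} (ha : (unitCentralizer (a : R)).FiniteIndex) :
    (Set.range (fun w : Rˣ => w * a * w⁻¹)).Finite := by
  have h1 := orbit_finite_of_finiteIndex ha
  apply Set.Finite.of_finite_image (f := fun u : Rˣ => (u : R))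
  · apply h1.subset
    rintro x ⟨y, ⟨w, rfl⟩, rfl⟩
    exact ⟨w, by simp [Units.val_mul]⟩
  · exact fun s _ t _ hst => Units.ext hst

/-- Part 1 in the case of a finite base field. -/
lemma part1_finiteF (F : Type*) [Field F] [Finite F] [Algebra F R] [Nontrivial R]
    {H : Subgroup Rˣ} (hH : IsOmegaSubgroup H) (u v : Rˣ)
    (hu : (unitCentralizer (u : R)).FiniteIndex) (hv : (unitCentralizer (v : R)).FiniteIndex)
    (hu' : IsOfFinOrder u) (hv' : IsOfFinOrder v) :
    IsNilpotent (((u⁻¹ * v⁻¹ * u * v : Rˣ) : R) - 1) := by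
  classical
  -- characteristic
  obtain ⟨p, hpF⟩ := CharP.exists F
  haveI := hpF
  have hinj : Function.Injective (algebraMap F R) := (algebraMap F R).injective
  haveI hpR : CharP R p := charP_of_injective_algebraMap hinj p
  have hp0 : p ≠ 0 := CharP.char_ne_zero_of_finite F p
  haveI : NeZero p := ⟨hp0⟩
  letI : Algebra (ZMod p) R := ZMod.algebra R p
  -- the conjugation-closed set of torsion generators
  set X : Set Rˣ := Set.range (fun w : Rˣ => w * u * w⁻¹) ∪
    Set.range (fun w : Rˣ => w * v * w⁻¹) with hXdef
  have hXfin : X.Finite := (unit_orbit_finite hu).union (unit_orbit_finite hv)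
  have hXconj : ∀ g ∈ X, ∀ w : Rˣ, w * g * w⁻¹ ∈ X := by
    rintro g (⟨s, rfl⟩ | ⟨s, rfl⟩) w
    · exact Or.inl ⟨w * s, by group⟩
    · exact Or.inr ⟨w * s, by group⟩
  have hXtor : ∀ g ∈ X, ∃ n, 0 < n ∧ g ^ n = 1 := by
    have haux : ∀ (a : Rˣ) (s : Rˣ), IsOfFinOrder a → ∃ n, 0 < n ∧ (s * a * s⁻¹) ^ n = 1 := by
      intro a s ha
      obtain ⟨n, hn0, hn⟩ := isOfFinOrder_iff_pow_eq_one.mp ha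
      exact ⟨n, hn0, by rw [conj_pow, hn, mul_one, mul_inv_cancel]⟩
    rintro g (⟨s, rfl⟩ | ⟨s, rfl⟩)
    · exact haux u s hu'
    · exact haux v s hv'
  set E : Subgroup Rˣ := Subgroup.closure X with hEdef
  have hEfin : ((E : Subgroup Rˣ) : Set Rˣ).Finite := dietzmann hXfin hXconj hXtor
  have hEconj : ∀ g ∈ E, ∀ w : Rˣ, w * g * w⁻¹ ∈ E := by
    intro g hg w
    induction hg using Subgroup.closure_induction with
    | mem g hgX => exact Subgroup.subset_closure (hXconj g hgX w)
    | one => simpa using E.one_mem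
    | mul g h _ _ hgE hhE =>
      have : w * (g * h) * w⁻¹ = (w * g * w⁻¹) * (w * h * w⁻¹) := by group
      rw [this]; exact E.mul_mem hgE hhE
    | inv g _ hgE =>
      have : w * g⁻¹ * w⁻¹ = (w * g * w⁻¹)⁻¹ := by group
      rw [this]; exact E.inv_mem hgE
  have huE : u ∈ E := Subgroup.subset_closure (Or.inl ⟨1, by simp⟩)
  have hvE : v ∈ E := Subgroup.subset_closure (Or.inr ⟨1, by simp⟩)
  -- the finite subring spanned by E
  set S : Set R := (fun g : Rˣ => (g : R)) '' (E : Set Rˣ) with hSdef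
  have hSfin : S.Finite := hEfin.image _
  have hSmul : ∀ x ∈ S, ∀ y ∈ S, x * y ∈ S := by
    rintro x ⟨g, hg, rfl⟩ y ⟨g', hg', rfl⟩
    exact ⟨g * g', E.mul_mem hg hg', (Units.val_mul g g').symm⟩
  set M : Submodule (ZMod p) R := Submodule.span (ZMod p) S with hMdef
  have hMmul : ∀ x ∈ M, ∀ y ∈ M, x * y ∈ M := by
    intro x hx y hy
    have h1 : x * y ∈ M * M := Submodule.mul_mem_mul hx hy
    have h2 : M * M = Submodule.span (ZMod p) (S * S) := Submodule.span_mul_span _ _ _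
    have h3 : Submodule.span (ZMod p) (S * S) ≤ M := by
      apply Submodule.span_le.mpr
      intro t ht
      obtain ⟨a, ha, b, hb, rfl⟩ := Set.mem_mul.mp ht
      exact Submodule.subset_span (hSmul a ha b hb)
    exact h3 (h2 ▸ h1)
  have one_mem_M : (1 : R) ∈ M := Submodule.subset_span ⟨1, E.one_mem, Units.val_one⟩
  set A : Subring R :=
    { carrier := (M : Set R)
      mul_mem' := fun {a b} ha hb => hMmul a ha b hb
      one_mem' := one_mem_M
      add_mem' := fun {a b} ha hb => M.add_mem ha hb
      zero_mem' := M.zero_mem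
      neg_mem' := fun {a} ha => M.neg_mem ha } with hAdef
  -- A is finite
  haveI hMfg : Module.Finite (ZMod p) M := Module.Finite.iff_fg.mpr (Submodule.fg_span hSfin)
  haveI : Finite M := Module.finite_of_finite (ZMod p)
  have hAfin : (A : Set R).Finite := by
    have : ((A : Set R)) = (M : Set R) := rfl
    rw [this]
    exact Set.finite_coe_iff.mp (inferInstance : Finite M)
  -- A is invariant under conjugation
  have hAconj : ∀ (w : Rˣ) (x : R), x ∈ A → (w : R) * x * ((w⁻¹ : Rˣ) : R) ∈ A := by
    intro w x hx
    set L : R →ₗ[ZMod p] R := {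
      toFun := fun t => (w : R) * t * ((w⁻¹ : Rˣ) : R),
      map_add' := by
        intro a b
        show (w : R) * (a + b) * ((w⁻¹ : Rˣ) : R)
          = (w : R) * a * ((w⁻¹ : Rˣ) : R) + (w : R) * b * ((w⁻¹ : Rˣ) : R)
        rw [mul_add, add_mul],
      map_smul' := by
        intro z a
        show (w : R) * (z • a) * ((w⁻¹ : Rˣ) : R)
          = (RingHom.id (ZMod p)) z • ((w : R) * a * ((w⁻¹ : Rˣ) : R))
        simp only [RingHom.id_apply]
        rw [Algebra.smul_def, Algebra.smul_def]
        rw [← mul_assoc ((w : R)) _ a, ← Algebra.commutes z ((w : R))]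
        rw [mul_assoc (algebraMap (ZMod p) R z) ((w : R)) a,
          mul_assoc (algebraMap (ZMod p) R z) ((w : R) * a) (((w⁻¹ : Rˣ) : R))] } with hLdef
    have hLS : ∀ s ∈ S, L s ∈ S := by
      rintro s ⟨g, hg, rfl⟩
      refine ⟨w * g * w⁻¹, hEconj g hg w, ?_⟩
      simp [hLdef, Units.val_mul]
    have hmap : Submodule.map L M ≤ M := by
      rw [hMdef, Submodule.map_span]
      apply Submodule.span_le.mpr
      rintro t ⟨s, hs, rfl⟩
      exact Submodule.subset_span (hLS s hs)
    exact hmap ⟨x, hx, rfl⟩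
  -- every idempotent of A is central in R
  have hidemA : ∀ e : R, e ∈ A → e * e = e → ∀ r : R, e * r = r * e := by
    intro e heA hee
    apply idem_central hH hee
    apply hAfin.subset
    rintro x ⟨w, rfl⟩
    exact hAconj w e heA
  -- pass to the finite ring ↥A
  haveI : Finite (↥A) := hAfin.to_subtype
  have hcentA : ∀ e : ↥A, e * e = e → ∀ x : ↥A, e * x = x * e := by
    intro e he x
    have h1 : (e : R) * (e : R) = (e : R) := by exact_mod_cast congrArg Subtype.val he
    have h2 := hidemA (e : R) e.2 h1 (x : R)
    exact Subtype.ext h2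
  -- units of A from torsion elements of E
  have hmemA : ∀ g ∈ E, ((g : Rˣ) : R) ∈ A := by
    intro g hg
    exact Submodule.subset_span ⟨g, hg, rfl⟩
  set gA : (↥A)ˣ := {
    val := ⟨((u⁻¹ : Rˣ) : R), hmemA _ (E.inv_mem huE)⟩,
    inv := ⟨((u : Rˣ) : R), hmemA _ huE⟩,
    val_inv := Subtype.ext (by
      show ((u⁻¹ : Rˣ) : R) * ((u : Rˣ) : R) = 1
      rw [← Units.val_mul, inv_mul_cancel, Units.val_one]),
    inv_val := Subtype.ext (by
      show ((u : Rˣ) : R) * ((u⁻¹ : Rˣ) : R) = 1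
      rw [← Units.val_mul, mul_inv_cancel, Units.val_one]) } with hgAdef
  set hA : (↥A)ˣ := {
    val := ⟨((v⁻¹ : Rˣ) : R), hmemA _ (E.inv_mem hvE)⟩,
    inv := ⟨((v : Rˣ) : R), hmemA _ hvE⟩,
    val_inv := Subtype.ext (by
      show ((v⁻¹ : Rˣ) : R) * ((v : Rˣ) : R) = 1
      rw [← Units.val_mul, inv_mul_cancel, Units.val_one]),
    inv_val := Subtype.ext (by
      show ((v : Rˣ) : R) * ((v⁻¹ : Rˣ) : R) = 1
      rw [← Units.val_mul, mul_inv_cancel, Units.val_one]) } with hhAdef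
  have hnilA := keyFin (Nat.card ↥A) (↥A) le_rfl hcentA gA hA
  have := hnilA.map (Subring.subtype A)
  have hval : (Subring.subtype A) ((↑(gA * hA * gA⁻¹ * hA⁻¹) : ↥A) - 1)
      = ((u⁻¹ * v⁻¹ * u * v : Rˣ) : R) - 1 := by
    rw [map_sub, map_one]
    congr 1
  rwa [hval] at this

end FiniteFieldCase
/-- If `U(R)` contains an ω-subgroup and `u, v ∈ ΔU` have finite order,
then the commutator `u⁻¹v⁻¹uv` is unipotent and commutes with every element of `ΔU`. -/
theorem torsion_commutator_unipotent_central (F : Type*) [Field F]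
    (R : Type*) [Ring R] [Algebra F R]
    (H : Subgroup Rˣ) (hH : IsOmegaSubgroup H)
    (u v : Rˣ) (hu : u ∈ FCRadical R) (hv : v ∈ FCRadical R)
    (hu' : IsOfFinOrder u) (hv' : IsOfFinOrder v) :
    IsNilpotent (((u⁻¹ * v⁻¹ * u * v : Rˣ) : R) - 1) ∧
    ∀ w ∈ FCRadical R,
      (u⁻¹ * v⁻¹ * u * v) * w = w * (u⁻¹ * v⁻¹ * u * v) := by
  haveI : Nontrivial R := by
    by_contra hcon
    rw [not_nontrivial_iff_subsingleton] at hcon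
    haveI := hcon
    haveI : Subsingleton Rˣ := ⟨fun a b => Units.ext (Subsingleton.elim _ _)⟩
    exact hH.1 (Set.toFinite _)
  have huI : (unitCentralizer (u : R)).FiniteIndex := hu
  have hvI : (unitCentralizer (v : R)).FiniteIndex := hv
  have part1 : IsNilpotent (((u⁻¹ * v⁻¹ * u * v : Rˣ) : R) - 1) := by
    rcases finite_or_infinite F with hF | hF
    · exact part1_finiteF F hH u v huI hvI hu' hv'
    · have hcomm := fact1 (F := F) u v huI hv'
      have huv : u * v = v * u := Units.ext (by rw [Units.val_mul, Units.val_mul]; exact hcomm)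
      have hc1 : u⁻¹ * v⁻¹ * u * v = 1 := by
        have step : v⁻¹ * u * v = u := by
          rw [mul_assoc, huv, ← mul_assoc, inv_mul_cancel, one_mul]
        calc u⁻¹ * v⁻¹ * u * v = u⁻¹ * (v⁻¹ * u * v) := by
              rw [mul_assoc, mul_assoc, mul_assoc]
          _ = u⁻¹ * u := by rw [step]
          _ = 1 := inv_mul_cancel u
      rw [hc1, Units.val_one, sub_self]
      exact ⟨1, by rw [pow_one]⟩
  refine ⟨part1, ?_⟩
  intro w hw
  have hcmem : u⁻¹ * v⁻¹ * u * v ∈ FCRadical R :=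
    (FCRadical R).mul_mem ((FCRadical R).mul_mem ((FCRadical R).mul_mem
      ((FCRadical R).inv_mem hu) ((FCRadical R).inv_mem hv)) hu) hv
  have hcI : (unitCentralizer (((u⁻¹ * v⁻¹ * u * v : Rˣ)) : R)).FiniteIndex := hcmem
  have hwI : (unitCentralizer ((w : Rˣ) : R)).FiniteIndex := hw
  have hfin := fact2 hH w (u⁻¹ * v⁻¹ * u * v) hwI hcI part1
  exact Units.ext (by rw [Units.val_mul, Units.val_mul]; exact hfin.symm)
end

section
/- Let R be an algebra over a field F such that the group of units U(R) contains an ω-subgroup. If every element of the FC-subring ∇(R) is algebraic over F, then the FC-radical ΔU is a nilpotent group of nilpotency class at most 2. -/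
/-! ### Auxiliary infrastructure -/

section FCAux

open Polynomial

variable {R : Type*} [Ring R]

lemma commute_of_mem_unitCentralizer {a : R} {u : Rˣ} (h : u ∈ unitCentralizer a) :
    Commute (u : R) a := h

lemma mem_unitCentralizer_of_commute {a : R} {u : Rˣ} (h : Commute (u : R) a) :
    u ∈ unitCentralizer a := h

lemma FCSubring.mem_of_le {a : R} (K : Subgroup Rˣ) (hK : K.FiniteIndex)
    (h : K ≤ unitCentralizer a) : a ∈ FCSubring R := by
  haveI := hK
  exact Subgroup.finiteIndex_of_le h

lemma FCSubring.one_mem' : (1 : R) ∈ FCSubring R := by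
  have h : unitCentralizer (1 : R) = ⊤ := by
    ext u; simp [mem_unitCentralizer]
  show (unitCentralizer (1 : R)).FiniteIndex
  rw [h]; infer_instance

lemma FCSubring.add_mem' {a b : R} (ha : a ∈ FCSubring R) (hb : b ∈ FCSubring R) :
    a + b ∈ FCSubring R := by
  haveI : (unitCentralizer a).FiniteIndex := ha
  haveI : (unitCentralizer b).FiniteIndex := hb
  exact FCSubring.mem_of_le (unitCentralizer a ⊓ unitCentralizer b) inferInstance
    (fun u hu => mem_unitCentralizer_of_commute
      ((commute_of_mem_unitCentralizer hu.1).add_right (commute_of_mem_unitCentralizer hu.2)))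

lemma FCSubring.mul_mem' {a b : R} (ha : a ∈ FCSubring R) (hb : b ∈ FCSubring R) :
    a * b ∈ FCSubring R := by
  haveI : (unitCentralizer a).FiniteIndex := ha
  haveI : (unitCentralizer b).FiniteIndex := hb
  exact FCSubring.mem_of_le (unitCentralizer a ⊓ unitCentralizer b) inferInstance
    (fun u hu => mem_unitCentralizer_of_commute
      ((commute_of_mem_unitCentralizer hu.1).mul_right (commute_of_mem_unitCentralizer hu.2)))

lemma FCSubring.neg_mem' {a : R} (ha : a ∈ FCSubring R) : -a ∈ FCSubring R := by
  haveI : (unitCentralizer a).FiniteIndex := ha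
  exact FCSubring.mem_of_le (unitCentralizer a) inferInstance
    (fun u hu => mem_unitCentralizer_of_commute ((commute_of_mem_unitCentralizer hu).neg_right))

lemma FCSubring.sub_mem' {a b : R} (ha : a ∈ FCSubring R) (hb : b ∈ FCSubring R) :
    a - b ∈ FCSubring R := by
  rw [sub_eq_add_neg]
  exact FCSubring.add_mem' ha (FCSubring.neg_mem' hb)

lemma FCSubring.pow_mem' {a : R} (ha : a ∈ FCSubring R) (n : ℕ) :
    a ^ n ∈ FCSubring R := by
  induction n with
  | zero => simpa using FCSubring.one_mem'
  | succ n ih => rw [pow_succ]; exact FCSubring.mul_mem' ih ha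

lemma FCSubring.zero_mem' : (0 : R) ∈ FCSubring R := by
  have h := FCSubring.sub_mem' (FCSubring.one_mem' (R := R)) FCSubring.one_mem'
  simpa using h

lemma FCRadical.coe_mem {u : Rˣ} (hu : u ∈ FCRadical R) : ((u : R)) ∈ FCSubring R := hu

lemma FCSubring.smul_mem' {F : Type*} [Field F] [Algebra F R] (c : F) {a : R}
    (ha : a ∈ FCSubring R) : c • a ∈ FCSubring R := by
  haveI : (unitCentralizer a).FiniteIndex := ha
  exact FCSubring.mem_of_le (unitCentralizer a) inferInstance (fun u hu =>
    mem_unitCentralizer_of_commute ((commute_of_mem_unitCentralizer hu).smul_right c))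

/-- An infinite subgroup meets every finite-index subgroup in an infinite set. -/
lemma inf_infinite_of_infinite {G : Type*} [Group G] {H K : Subgroup G}
    (hH : (H : Set G).Infinite) (hK : K.FiniteIndex) : ((H ⊓ K : Subgroup G) : Set G).Infinite := by
  haveI := hK
  haveI : Infinite H := hH.to_subtype
  by_contra hfin
  rw [Set.not_infinite] at hfin
  haveI : Finite ((H ⊓ K : Subgroup G) : Set G) := hfin.to_subtype
  have e : (K.subgroupOf H) ≃ ((H ⊓ K : Subgroup G) : Set G) :=
    { toFun := fun x => ⟨x.1.1, x.1.2, Subgroup.mem_subgroupOf.mp x.2⟩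
      invFun := fun y => ⟨⟨y.1, y.2.1⟩, Subgroup.mem_subgroupOf.mpr y.2.2⟩
      left_inv := fun x => rfl
      right_inv := fun y => rfl }
  haveI : Finite (K.subgroupOf H) := Finite.of_equiv _ e.symm
  haveI : Finite (H ⧸ (K.subgroupOf H)) := inferInstance
  have : Finite H := Finite.of_equiv _
    (Subgroup.groupEquivQuotientProdSubgroup (s := K.subgroupOf H)).symm
  exact not_finite (H : Type _)

/-- Master consequence of the ω-subgroup property. -/
lemma omega_master {H : Subgroup Rˣ} (hH : IsOmegaSubgroup H) (x y : R) {T : Set Rˣ}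
    (hT : T.Infinite) (hTH : ∀ t ∈ T, t ∈ H)
    (hann : ∀ t ∈ T, (1 - (t : R)) * (x * y - y * x) = 0) :
    x * y - y * x = 0 := by
  by_contra hc
  exact hT ((hH.2 x y hc).subset fun t ht => ⟨hTH t ht, hann t ht⟩)

lemma exists_infinite_fiber_of_mapsTo {α β : Type*} {s : Set α} {t : Set β} {f : α → β}
    (hs : s.Infinite) (ht : t.Finite) (hf : Set.MapsTo f s t) :
    ∃ b, (s ∩ f ⁻¹' {b}).Infinite := by
  by_contra h
  push_neg at h
  have hsub : s ⊆ ⋃ b ∈ t, s ∩ f ⁻¹' {b} := fun a ha => Set.mem_biUnion (hf ha) ⟨ha, rfl⟩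
  exact hs ((ht.biUnion fun b _ => h b).subset hsub)

/-- The set of conjugates of an FC-element is finite. -/
lemma finite_conjSet {a : R} (ha : a ∈ FCSubring R) :
    (Set.range fun g : Rˣ => (g : R) * a * ((g⁻¹ : Rˣ) : R)).Finite := by
  haveI : (unitCentralizer a).FiniteIndex := ha
  have hwd : ∀ g g' : Rˣ, (QuotientGroup.leftRel (unitCentralizer a)) g g' →
      (g : R) * a * ((g⁻¹ : Rˣ) : R) = (g' : R) * a * ((g'⁻¹ : Rˣ) : R) := by
    intro g g' hgg
    rw [QuotientGroup.leftRel_apply] at hgg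
    have hc : Commute ((g⁻¹ * g' : Rˣ) : R) a := commute_of_mem_unitCentralizer hgg
    have h1 : g' = g * (g⁻¹ * g') := by group
    have h2 : ((g⁻¹ * g' : Rˣ) : R) * a * (((g⁻¹ * g')⁻¹ : Rˣ) : R) = a := by
      rw [hc]
      rw [mul_assoc, ← Units.val_mul, mul_inv_cancel, Units.val_one, mul_one]
    calc (g : R) * a * ((g⁻¹ : Rˣ) : R)
        = (g : R) * (((g⁻¹ * g' : Rˣ) : R) * a * (((g⁻¹ * g')⁻¹ : Rˣ) : R)) * ((g⁻¹ : Rˣ) : R) := by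
          rw [h2]
      _ = (g' : R) * a * ((g'⁻¹ : Rˣ) : R) := by
          conv_rhs => rw [h1]
          simp only [Units.val_mul, mul_inv_rev]
          noncomm_ring
  let f : (Rˣ ⧸ unitCentralizer a) → R :=
    Quotient.lift (fun g : Rˣ => (g : R) * a * ((g⁻¹ : Rˣ) : R)) hwd
  have : (Set.range fun g : Rˣ => (g : R) * a * ((g⁻¹ : Rˣ) : R)) ⊆ Set.range f := by
    rintro x ⟨g, rfl⟩
    exact ⟨QuotientGroup.mk g, rfl⟩
  exact (Set.finite_range f).subset this

end FCAux

/-! ### The infinite-field case: the FC-subring is commutative -/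

section InfiniteField

open Polynomial

variable {F : Type*} [Field F] {R : Type*} [Ring R] [Algebra F R]

lemma exists_unit_eq_add_algebraMap {b : R} {q : F[X]} (hq0 : Polynomial.aeval b q = 0)
    {lam : F} (hlam : q.eval (-lam) ≠ 0) :
    ∃ u : Rˣ, (u : R) = b + algebraMap F R lam ∧
      ∃ g : F[X], ((u⁻¹ : Rˣ) : R) = Polynomial.aeval b g := by
  set d : F[X] := X - C (-lam) with hd
  have hmon : d.Monic := monic_X_sub_C (-lam)
  have hdiv : q %ₘ d + d * (q /ₘ d) = q := modByMonic_add_div q d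
  have hmod : q %ₘ d = C (q.eval (-lam)) := modByMonic_X_sub_C_eq_C_eval q (-lam)
  set γ : F := q.eval (-lam)
  set g : F[X] := (q /ₘ d) * C (-γ⁻¹) with hg
  have haevald : Polynomial.aeval b d = b + algebraMap F R lam := by
    simp [hd, map_neg]
  have key : (b + algebraMap F R lam) * Polynomial.aeval b g = 1 := by
    have h0 : algebraMap F R γ + (b + algebraMap F R lam) * Polynomial.aeval b (q /ₘ d) = 0 := by
      have := congrArg (Polynomial.aeval b) hdiv
      rw [map_add, map_mul, hmod, aeval_C, haevald] at this
      rw [this, hq0]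
    have h1 : (b + algebraMap F R lam) * Polynomial.aeval b (q /ₘ d) = - algebraMap F R γ :=
      eq_neg_of_add_eq_zero_right h0
    rw [hg, map_mul, aeval_C, ← mul_assoc, h1]
    rw [map_neg, mul_neg, neg_mul, neg_neg, ← map_mul, mul_inv_cancel₀ hlam, map_one]
  have key2 : Polynomial.aeval b g * (b + algebraMap F R lam) = 1 := by
    have hcomm : Polynomial.aeval b g * Polynomial.aeval b d
        = Polynomial.aeval b d * Polynomial.aeval b g := by
      rw [← map_mul, ← map_mul, mul_comm]
    rw [← haevald, hcomm, haevald]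
    exact key
  exact ⟨⟨b + algebraMap F R lam, Polynomial.aeval b g, key, key2⟩, rfl, g, rfl⟩

/-- Over an infinite field, any two elements of the FC-subring commute. -/
theorem FCSubring.comm_of_infinite [Infinite F]
    (halg : ∀ a ∈ FCSubring R, IsAlgebraic F a)
    {a b : R} (ha : a ∈ FCSubring R) (hb : b ∈ FCSubring R) : b * a = a * b := by
  obtain ⟨p, hp0, hpe⟩ := halg b hb
  haveI : (unitCentralizer a).FiniteIndex := ha
  have hroots : {lam : F | p.eval (-lam) = 0}.Finite := by
    have h1 : {x : F | p.IsRoot x}.Finite := p.finite_setOf_isRoot hp0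
    have h2 : {lam : F | p.eval (-lam) = 0} ⊆ (fun lam : F => -lam) ⁻¹' {x : F | p.IsRoot x} :=
      fun lam h => h
    exact (h1.preimage (fun x _ y _ h => by simpa using congrArg Neg.neg h)).subset h2
  have hLam : ({lam : F | p.eval (-lam) = 0}ᶜ : Set F).Infinite := hroots.infinite_compl
  have key : ∀ lam ∈ ({lam : F | p.eval (-lam) = 0}ᶜ : Set F), ∃ u : Rˣ,
      (u : R) = b + algebraMap F R lam ∧ ∃ g : F[X], ((u⁻¹ : Rˣ) : R) = Polynomial.aeval b g :=
    fun lam hlam => exists_unit_eq_add_algebraMap hpe hlam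
  choose! U hU1 hU2 using key
  haveI : Finite (Rˣ ⧸ unitCentralizer a) := inferInstance
  obtain ⟨lam, hlam, mu, hmu, hne, heq⟩ :=
    Set.Infinite.exists_ne_map_eq_of_mapsTo
      (f := fun lam : F => (QuotientGroup.mk (U lam) : Rˣ ⧸ unitCentralizer a))
      hLam (Set.mapsTo_univ _ _) Set.finite_univ
  have hmem : (U lam)⁻¹ * U mu ∈ unitCentralizer a := QuotientGroup.eq.mp heq
  have hc0 : Commute (((U lam)⁻¹ * U mu : Rˣ) : R) a := commute_of_mem_unitCentralizer hmem
  rw [Units.val_mul] at hc0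
  set A : R := (((U lam)⁻¹ : Rˣ) : R) with hA
  have hinvmul : A * ((U lam : Rˣ) : R) = 1 := by
    rw [hA, ← Units.val_mul, inv_mul_cancel, Units.val_one]
  have hexp : A * ((U mu : Rˣ) : R) = 1 + (mu - lam) • A := by
    rw [hU1 mu hmu]
    have hsplit : b + algebraMap F R mu = (b + algebraMap F R lam) + algebraMap F R (mu - lam) := by
      rw [map_sub]; abel
    rw [hsplit, mul_add, ← hU1 lam hlam, hinvmul]
    congr 1
    rw [← Algebra.commutes, ← Algebra.smul_def]
  rw [hexp] at hc0
  have hc1 : Commute ((mu - lam) • A) a := by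
    have h1 : Commute (1 : R) a := Commute.one_left a
    have := hc0.sub_left h1
    simpa using this
  have hc2 : Commute A a := by
    have h : (mu - lam) • (A * a) = (mu - lam) • (a * A) := by
      have h' := hc1
      unfold Commute SemiconjBy at h'
      rwa [smul_mul_assoc, mul_smul_comm] at h'
    have hmulam : mu - lam ≠ 0 := sub_ne_zero.mpr (Ne.symm hne)
    have h2 := congrArg (fun x => (mu - lam)⁻¹ • x) h
    simp only [smul_smul, inv_mul_cancel₀ hmulam, one_smul] at h2
    exact h2
  have hc3 : Commute ((U lam : Rˣ) : R) a := by
    have h := Commute.units_inv_left (u := (U lam)⁻¹) hc2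
    rwa [inv_inv] at h
  have hc4 : Commute b a := by
    rw [hU1 lam hlam] at hc3
    have halg' : Commute (algebraMap F R lam) a := (Algebra.commutes lam a : _)
    have := hc3.sub_left halg'
    simpa using this
  exact hc4

end InfiniteField

/-! ### Statements provided by the later chunks -/

section MainTools

variable {R : Type*} [Ring R]

/-- Identity for the inverse of `1 + x` with `x` nilpotent. -/
lemma inv_one_add_eq {x : R} (u : Rˣ) (hu : (u : R) = 1 + x) :
    ((u⁻¹ : Rˣ) : R) = 1 - x + x * x * ((u⁻¹ : Rˣ) : R) := by
  have hru : (1 + x) * ((u⁻¹ : Rˣ) : R) = 1 := by rw [← hu]; exact Units.mul_inv u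
  have hlu : ((u⁻¹ : Rˣ) : R) * (1 + x) = 1 := by rw [← hu]; exact Units.inv_mul u
  have hexp : (1 + x) * (1 - x + x * x * ((u⁻¹ : Rˣ) : R)) = 1 := by
    calc (1 + x) * (1 - x + x * x * ((u⁻¹ : Rˣ) : R))
        = (1 - x * x) + x * x * ((1 + x) * ((u⁻¹ : Rˣ) : R)) := by noncomm_ring
      _ = 1 := by rw [hru, mul_one]; noncomm_ring
  calc ((u⁻¹ : Rˣ) : R)
      = ((u⁻¹ : Rˣ) : R) * ((1 + x) * (1 - x + x * x * ((u⁻¹ : Rˣ) : R))) := by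
        rw [hexp, mul_one]
    _ = (1 - x + x * x * ((u⁻¹ : Rˣ) : R)) := by rw [← mul_assoc, hlu, one_mul]

/-- Core ω-pigeonhole step: a nilpotent FC-element whose square commutes with `b`
already commutes with `b`. -/
lemma FC_comm_core {H : Subgroup Rˣ} (hH : IsOmegaSubgroup H)
    {n b : R} (hn : n ∈ FCSubring R) (hb : b ∈ FCSubring R)
    (hnil : IsNilpotent n) (h2 : n ^ 2 * b = b * n ^ 2) : n * b = b * n := by
  classical
  haveI : (unitCentralizer n).FiniteIndex := hn
  haveI : (unitCentralizer b).FiniteIndex := hb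
  set c : R := n * b - b * n with hcdef
  have hH0 : ((H ⊓ (unitCentralizer n ⊓ unitCentralizer b) : Subgroup Rˣ) : Set Rˣ).Infinite :=
    inf_infinite_of_infinite hH.1 inferInstance
  have hUnit : ∀ h : Rˣ, h ∈ unitCentralizer n → IsUnit (1 + (h : R) * n) := by
    intro h hh
    have hcomm : Commute ((h : R)) n := commute_of_mem_unitCentralizer hh
    obtain ⟨s, hs⟩ := hnil
    exact IsNilpotent.isUnit_one_add ⟨s, by rw [hcomm.mul_pow, hs, mul_zero]⟩
  let μ : Rˣ → Rˣ := fun h => if hh : IsUnit (1 + (h : R) * n) then hh.unit else 1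
  have hμval : ∀ h : Rˣ, h ∈ unitCentralizer n → ((μ h : Rˣ) : R) = 1 + (h : R) * n := by
    intro h hh
    simp only [μ, dif_pos (hUnit h hh)]
    exact (hUnit h hh).unit_spec
  haveI : Finite (Rˣ ⧸ unitCentralizer b) := inferInstance
  obtain ⟨qb, hqb⟩ := exists_infinite_fiber_of_mapsTo
    (f := fun h : Rˣ => (QuotientGroup.mk (μ h) : Rˣ ⧸ unitCentralizer b))
    hH0 Set.finite_univ (Set.mapsTo_univ _ _)
  obtain ⟨h', hh'⟩ := hqb.nonempty
  have hmem' : h' ∈ H ⊓ (unitCentralizer n ⊓ unitCentralizer b) := hh'.1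
  have hh'n : Commute ((h' : R)) n := commute_of_mem_unitCentralizer hmem'.2.1
  have hh'b : Commute ((h' : R)) b := commute_of_mem_unitCentralizer hmem'.2.2
  set x' : R := (h' : R) * n with hx'def
  have key : ∀ h ∈ (((H ⊓ (unitCentralizer n ⊓ unitCentralizer b) : Subgroup Rˣ) : Set Rˣ) ∩
      (fun h : Rˣ => (QuotientGroup.mk (μ h) : Rˣ ⧸ unitCentralizer b)) ⁻¹' {qb}),
      (h : R) * c = (h' : R) * c := by
    intro h hh
    have hmem : h ∈ H ⊓ (unitCentralizer n ⊓ unitCentralizer b) := hh.1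
    have hhn : Commute ((h : R)) n := commute_of_mem_unitCentralizer hmem.2.1
    have hhb : Commute ((h : R)) b := commute_of_mem_unitCentralizer hmem.2.2
    set x : R := (h : R) * n with hxdef
    -- the quotient equality
    have hquot : (QuotientGroup.mk (μ h') : Rˣ ⧸ unitCentralizer b) = QuotientGroup.mk (μ h) := by
      have e1 : (QuotientGroup.mk (μ h) : Rˣ ⧸ unitCentralizer b) = qb := hh.2
      have e2 : (QuotientGroup.mk (μ h') : Rˣ ⧸ unitCentralizer b) = qb := hh'.2
      exact e2.trans e1.symm
    have hAmem : (μ h')⁻¹ * μ h ∈ unitCentralizer b := QuotientGroup.eq.mp hquot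
    have hAb : Commute ((((μ h')⁻¹ * μ h : Rˣ)) : R) b := commute_of_mem_unitCentralizer hAmem
    rw [Units.val_mul] at hAb
    set A : R := (((μ h')⁻¹ : Rˣ) : R) * ((μ h : Rˣ) : R) with hAdef
    have hw' : (((μ h')⁻¹ : Rˣ) : R) = 1 - x' + x' * x' * (((μ h')⁻¹ : Rˣ) : R) :=
      inv_one_add_eq (μ h') (hμval h' hmem'.2.1)
    have hAeq : A = (1 - x') * (1 + x) + x' * x' * A := by
      conv_lhs => rw [hAdef, hμval h hmem.2.1, hw']
      rw [add_mul, mul_assoc]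
      congr 2
      rw [hAdef, hμval h hmem.2.1]
    -- commuting facts for the quadratic pieces
    have hnnB : Commute (n * n) b := by
      have : n * n = n ^ 2 := by rw [pow_two]
      rw [this]; exact h2
    have hx'x'b : Commute (x' * x') b := by
      have hxx : x' * x' = ((h' : R) * (h' : R)) * (n * n) := by
        calc ((h' : R) * n) * ((h' : R) * n) = (h' : R) * ((n * (h' : R)) * n) := by noncomm_ring
          _ = (h' : R) * (((h' : R) * n) * n) := by rw [← hh'n.eq]
          _ = ((h' : R) * (h' : R)) * (n * n) := by noncomm_ring
      rw [hxx]
      exact (hh'b.mul_left hh'b).mul_left hnnB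
    have hx'xb : Commute (x' * x) b := by
      have hxx : x' * x = ((h' : R) * (h : R)) * (n * n) := by
        calc ((h' : R) * n) * ((h : R) * n) = (h' : R) * ((n * (h : R)) * n) := by noncomm_ring
          _ = (h' : R) * (((h : R) * n) * n) := by rw [← hhn.eq]
          _ = ((h' : R) * (h : R)) * (n * n) := by noncomm_ring
      rw [hxx]
      exact (hh'b.mul_left hhb).mul_left hnnB
    -- cancel the quadratic tail
    have hy : Commute ((1 - x') * (1 + x)) b := by
      have e1 : ((1 - x') * (1 + x)) * b + (x' * x' * A) * b
          = b * ((1 - x') * (1 + x)) + b * (x' * x' * A) := by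
        have h0 : (((1 - x') * (1 + x)) + x' * x' * A) * b
            = b * (((1 - x') * (1 + x)) + x' * x' * A) := by
          rw [← hAeq]; exact hAb.eq
        calc ((1 - x') * (1 + x)) * b + (x' * x' * A) * b
            = (((1 - x') * (1 + x)) + x' * x' * A) * b := by rw [add_mul]
          _ = b * (((1 - x') * (1 + x)) + x' * x' * A) := h0
          _ = b * ((1 - x') * (1 + x)) + b * (x' * x' * A) := by rw [mul_add]
      have e3 : (x' * x' * A) * b = b * (x' * x' * A) := by
        calc (x' * x' * A) * b = x' * x' * (b * A) := by rw [mul_assoc, hAb.eq]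
          _ = (x' * x' * b) * A := by rw [← mul_assoc]
          _ = (b * (x' * x')) * A := by rw [hx'x'b.eq]
          _ = b * (x' * x' * A) := by rw [mul_assoc]
      have e4 := e1
      rw [e3] at e4
      exact add_right_cancel e4
    -- extract linear part
    have hxsub : Commute (x - x') b := by
      have hexp : (1 - x') * (1 + x) = 1 + (x - x') - x' * x := by noncomm_ring
      have h1 : Commute (1 + (x - x') - x' * x) b := by rw [← hexp]; exact hy
      have h2' : Commute (1 + (x - x')) b := by
        have := h1.add_left hx'xb
        simpa [sub_add_cancel] using this
      have := h2'.sub_left (Commute.one_left b)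
      simpa using this
    -- conclude
    have hb1 : b * ((h : R) * n) = (h : R) * (b * n) := by
      rw [← mul_assoc, ← hhb.eq, mul_assoc]
    have hb1' : b * ((h' : R) * n) = (h' : R) * (b * n) := by
      rw [← mul_assoc, ← hh'b.eq, mul_assoc]
    have hkey : (h : R) * c - (h' : R) * c = (x - x') * b - b * (x - x') := by
      rw [hcdef, hxdef, hx'def]
      simp only [mul_sub, sub_mul, mul_assoc]
      rw [hb1, hb1']
      abel
    have : (h : R) * c - (h' : R) * c = 0 := by rw [hkey, hxsub.eq, sub_self]
    exact sub_eq_zero.mp this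
  -- build the infinite annihilating set
  set T0 := (((H ⊓ (unitCentralizer n ⊓ unitCentralizer b) : Subgroup Rˣ) : Set Rˣ) ∩
      (fun h : Rˣ => (QuotientGroup.mk (μ h) : Rˣ ⧸ unitCentralizer b)) ⁻¹' {qb}) with hT0def
  have hT0inf : T0.Infinite := hqb
  have hTinf : ((fun d : Rˣ => h'⁻¹ * d) '' T0).Infinite :=
    hT0inf.image ((mul_right_injective h'⁻¹).injOn)
  have hczero : c = 0 := by
    have := omega_master hH n b hTinf ?_ ?_
    · rw [hcdef]; exact this
    · rintro t ⟨d, hd, rfl⟩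
      exact mul_mem (inv_mem hmem'.1) hd.1.1
    · rintro t ⟨d, hd, rfl⟩
      have hdc : (d : R) * c = (h' : R) * c := key d hd
      have : ((h'⁻¹ * d : Rˣ) : R) * c = c := by
        rw [Units.val_mul, mul_assoc, hdc, ← mul_assoc, ← Units.val_mul, inv_mul_cancel,
          Units.val_one, one_mul]
      rw [sub_mul, one_mul, hcdef] at *
      rw [← hcdef] at this ⊢
      rw [this, sub_self]
  have := hczero
  rw [hcdef] at this
  exact sub_eq_zero.mp this

/-- Nilpotent FC-elements commute with every FC-element. -/
theorem FC_nilpotent_comm {H : Subgroup Rˣ} (hH : IsOmegaSubgroup H)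
    {ν b : R} (hν : ν ∈ FCSubring R) (hb : b ∈ FCSubring R) (hnil : IsNilpotent ν) :
    ν * b = b * ν := by
  obtain ⟨s, hs⟩ := hnil
  have key : ∀ k : ℕ, ∀ m : ℕ, 1 ≤ m → s ≤ m + k → ν ^ m * b = b * ν ^ m := by
    intro k
    induction k with
    | zero =>
      intro m _ hms
      have hz : ν ^ m = 0 := by
        have h1 : ν ^ m = ν ^ s * ν ^ (m - s) := by
          rw [← pow_add]; congr 1; omega
        rw [h1, hs, zero_mul]
      rw [hz, zero_mul, mul_zero]
    | succ k ih =>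
      intro m hm1 hms
      by_cases hcase : s ≤ m + k
      · exact ih m hm1 hcase
      · have h2 : (ν ^ m) ^ 2 * b = b * (ν ^ m) ^ 2 := by
          rw [← pow_mul]
          exact ih (m * 2) (by omega) (by omega)
        have hnil' : IsNilpotent (ν ^ m) := by
          obtain ⟨t, rfl⟩ := Nat.exists_eq_add_of_le hm1
          exact ⟨s, by rw [← pow_mul, add_mul, one_mul, pow_add, hs, zero_mul]⟩
        exact FC_comm_core hH (FCSubring.pow_mem' hν m) hb hnil' h2
  have := key s 1 le_rfl (by omega)
  simpa using this

end MainTools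

section IdemCentral

variable {R : Type*} [Ring R]

/-- Peirce-corner annihilation for idempotents of the FC-subring. -/
lemma FC_idem_aux {H : Subgroup Rˣ} (hH : IsOmegaSubgroup H) {e : R}
    (he : e ∈ FCSubring R) (hee : e * e = e) (y : R) : e * (y * (1 - e)) = 0 := by
  classical
  haveI : (unitCentralizer e).FiniteIndex := he
  have h1e : (1 - e) * e = 0 := by rw [sub_mul, one_mul, hee, sub_self]
  set Q : Set R := (fun w => e - w) '' (Set.range fun g : Rˣ => (g : R) * e * ((g⁻¹ : Rˣ) : R))
    with hQ
  have hQfin : Q.Finite := (finite_conjSet he).image _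
  have hmemQ : ∀ z : R, e * (z * (1 - e)) ∈ Q := by
    intro z
    set nz : R := e * (z * (1 - e)) with hnz
    have hsq : nz * nz = 0 := by
      calc nz * nz = e * z * ((1 - e) * e) * z * (1 - e) := by rw [hnz]; noncomm_ring
        _ = 0 := by rw [h1e]; noncomm_ring
    have hne : nz * e = 0 := by
      calc nz * e = e * z * ((1 - e) * e) := by rw [hnz]; noncomm_ring
        _ = 0 := by rw [h1e]; noncomm_ring
    have hen : e * nz = nz := by
      calc e * nz = (e * e) * (z * (1 - e)) := by rw [hnz]; noncomm_ring
        _ = nz := by rw [hee, hnz]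
    have hunit : (1 + nz) * (1 - nz) = 1 := by
      calc (1 + nz) * (1 - nz) = 1 - nz * nz := by noncomm_ring
        _ = 1 := by rw [hsq, sub_zero]
    have hunit' : (1 - nz) * (1 + nz) = 1 := by
      calc (1 - nz) * (1 + nz) = 1 - nz * nz := by noncomm_ring
        _ = 1 := by rw [hsq, sub_zero]
    refine ⟨(⟨1 + nz, 1 - nz, hunit, hunit'⟩ : Rˣ) * e *
      (((⟨1 + nz, 1 - nz, hunit, hunit'⟩ : Rˣ)⁻¹ : Rˣ) : R), ⟨_, rfl⟩, ?_⟩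
    show e - (1 + nz) * e * (1 - nz) = nz
    have hconj : (1 + nz) * e * (1 - nz) = e - nz := by
      calc (1 + nz) * e * (1 - nz) = (e + nz * e) * (1 - nz) := by noncomm_ring
        _ = e * (1 - nz) := by rw [hne, add_zero]
        _ = e - e * nz := by noncomm_ring
        _ = e - nz := by rw [hen]
    rw [hconj, sub_sub_cancel]
  set q : R := e * (y * (1 - e)) with hqdef
  have hH0 : ((H ⊓ unitCentralizer e : Subgroup Rˣ) : Set Rˣ).Infinite :=
    inf_infinite_of_infinite hH.1 inferInstance
  have hmaps : Set.MapsTo (fun d : Rˣ => (d : R) * q)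
      ((H ⊓ unitCentralizer e : Subgroup Rˣ) : Set Rˣ) Q := by
    intro d hd
    have hde : Commute ((d : R)) e := commute_of_mem_unitCentralizer hd.2
    have hrw : (d : R) * q = e * (((d : R) * y) * (1 - e)) := by
      calc (d : R) * (e * (y * (1 - e))) = ((d : R) * e) * y * (1 - e) := by noncomm_ring
        _ = (e * (d : R)) * y * (1 - e) := by rw [hde.eq]
        _ = e * (((d : R) * y) * (1 - e)) := by noncomm_ring
    show (d : R) * q ∈ Q
    rw [hrw]
    exact hmemQ _
  obtain ⟨qv, hqv⟩ := exists_infinite_fiber_of_mapsTo hH0 hQfin hmaps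
  obtain ⟨d', hd'⟩ := hqv.nonempty
  have hTinf : ((fun d : Rˣ => d'⁻¹ * d) ''
      (((H ⊓ unitCentralizer e : Subgroup Rˣ) : Set Rˣ) ∩ (fun d : Rˣ => (d : R) * q) ⁻¹' {qv})).Infinite :=
    hqv.image ((mul_right_injective d'⁻¹).injOn)
  have hzero : e * (y * (1 - e)) - (y * (1 - e)) * e = 0 := by
    apply omega_master hH _ _ hTinf
    · rintro t ⟨d, hd, rfl⟩
      exact mul_mem (inv_mem hd'.1.1) hd.1.1
    · rintro t ⟨d, hd, rfl⟩
      have h1 : (d : R) * q = (d' : R) * q := by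
        have e1 : (d : R) * q = qv := hd.2
        have e2 : (d' : R) * q = qv := hd'.2
        rw [e1, e2]
      have h2 : ((d'⁻¹ * d : Rˣ) : R) * q = q := by
        rw [Units.val_mul, mul_assoc, h1, ← mul_assoc, ← Units.val_mul, inv_mul_cancel,
          Units.val_one, one_mul]
      have hy0 : (y * (1 - e)) * e = 0 := by
        rw [mul_assoc, h1e, mul_zero]
      rw [hy0, sub_zero, ← hqdef, sub_mul, one_mul, h2, sub_self]
  have hy0 : (y * (1 - e)) * e = 0 := by rw [mul_assoc, h1e, mul_zero]
  rw [hy0, sub_zero] at hzero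
  exact hzero

/-- Idempotents of the FC-subring are central. -/
theorem FC_idem_central {H : Subgroup Rˣ} (hH : IsOmegaSubgroup H) {e : R}
    (he : e ∈ FCSubring R) (hee : e * e = e) : ∀ r : R, e * r = r * e := by
  intro r
  have h1 := FC_idem_aux hH he hee r
  have he' : (1 : R) - e ∈ FCSubring R := FCSubring.sub_mem' FCSubring.one_mem' he
  have hee' : (1 - e) * ((1 : R) - e) = 1 - e := by
    calc (1 - e) * ((1 : R) - e) = 1 - e - e + e * e := by noncomm_ring
      _ = 1 - e := by rw [hee]; abel
  have h2 := FC_idem_aux hH he' hee' r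
  rw [sub_sub_cancel] at h2
  have h1' : e * r = e * (r * e) := by
    have h : e * (r * (1 - e)) = e * r - e * (r * e) := by noncomm_ring
    rw [h] at h1
    exact sub_eq_zero.mp h1
  have h2' : r * e = e * (r * e) := by
    have h : (1 - e) * (r * e) = r * e - e * (r * e) := by noncomm_ring
    rw [h] at h2
    exact sub_eq_zero.mp h2
  exact h1'.trans h2'.symm

end IdemCentral

section PowIdem

/-- In any monoid, a repetition among powers yields an idempotent power. -/
lemma exists_idem_pow {M : Type*} [Monoid M] {x : M} {a b : ℕ} (hab : a < b)
    (h : x ^ a = x ^ b) : ∃ N, 1 ≤ N ∧ x ^ N * x ^ N = x ^ N := by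
  set d := b - a with hd
  have hd1 : 1 ≤ d := by omega
  have hbase : x ^ (a + d) = x ^ a := by rw [show a + d = b by omega]; exact h.symm
  have step : ∀ m, a ≤ m → x ^ (m + d) = x ^ m := by
    intro m hm
    have h1 : x ^ (m + d) = x ^ (m - a) * x ^ (a + d) := by
      rw [← pow_add]; congr 1; omega
    rw [h1, hbase, ← pow_add]
    congr 1; omega
  have iter : ∀ j m, a ≤ m → x ^ (m + j * d) = x ^ m := by
    intro j
    induction j with
    | zero => intro m _; simp
    | succ j ih =>
      intro m hm
      have h1 : m + (j + 1) * d = (m + j * d) + d := by ring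
      rw [h1, step _ (le_trans hm (Nat.le_add_right _ _)), ih m hm]
  refine ⟨d * (a + 1), Nat.one_le_iff_ne_zero.mpr (by positivity), ?_⟩
  rw [← pow_add]
  have h1 : d * (a + 1) + d * (a + 1) = d * (a + 1) + (a + 1) * d := by ring
  have h2 : a ≤ d * (a + 1) := le_trans (Nat.le_succ a) (Nat.le_mul_of_pos_left _ hd1)
  rw [h1, iter (a + 1) (d * (a + 1)) h2]

end PowIdem

section SpanFinite

variable {F : Type*} [Field F] {R : Type*} [Ring R] [Algebra F R]

lemma finite_span_of_finite [Finite F] {s : Set R} (hs : s.Finite) :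
    ((Submodule.span F s : Submodule F R) : Set R).Finite := by
  refine Set.Finite.induction_on _ hs ?_ ?_
  · rw [Submodule.span_empty]
    exact (Set.finite_singleton 0).subset (by simp)
  · intro a s' _ _ ih
    have hsub : ((Submodule.span F (insert a s') : Submodule F R) : Set R) ⊆
        Set.image2 (fun (c : F) (z : R) => c • a + z) Set.univ
          ((Submodule.span F s' : Submodule F R) : Set R) := by
      intro x hx
      obtain ⟨c, z, hz, rfl⟩ := Submodule.mem_span_insert.mp hx
      exact Set.mem_image2_of_mem (Set.mem_univ c) hz
    exact (Set.Finite.image2 _ Set.finite_univ ih).subset hsub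

open Polynomial in
/-- Over a finite field, FC-units are torsion. -/
lemma FC_torsion [Finite F] (halg : ∀ a ∈ FCSubring R, IsAlgebraic F a)
    {u : Rˣ} (hu : u ∈ FCRadical R) : ∃ N, 1 ≤ N ∧ u ^ N = 1 := by
  obtain ⟨p, hp0, hpe⟩ := halg _ (FCRadical.coe_mem hu)
  set q : F[X] := p * C (p.leadingCoeff)⁻¹ with hq
  have hqm : q.Monic := monic_mul_leadingCoeff_inv hp0
  have hqe : Polynomial.aeval ((u : R)) q = 0 := by
    rw [hq, map_mul, hpe, zero_mul]
  set d := q.natDegree with hd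
  have main : ∀ a b : ℕ, a < b → ((u : R)) ^ a = ((u : R)) ^ b → ∃ N, 1 ≤ N ∧ u ^ N = 1 := by
    intro a b hab hequ
    have hu' : u ^ a = u ^ b := Units.ext (by
      rw [Units.val_pow_eq_pow_val, Units.val_pow_eq_pow_val]; exact hequ)
    refine ⟨b - a, by omega, ?_⟩
    have hcan : u ^ a * u ^ (b - a) = u ^ a * 1 := by
      rw [mul_one, ← pow_add, show a + (b - a) = b by omega]
      exact hu'.symm
    exact mul_left_cancel hcan
  by_cases hd0 : d = 0
  · have h10 : (1 : R) = 0 := by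
      have hq1 : q = 1 := hqm.natDegree_eq_zero.mp hd0
      rw [hq1, map_one] at hqe
      exact hqe
    haveI : Subsingleton R := subsingleton_of_zero_eq_one h10.symm
    exact ⟨1, le_rfl, Units.ext (Subsingleton.elim _ _)⟩
  · set S : Submodule F R := Submodule.span F ((fun i : ℕ => ((u : R)) ^ i) '' Set.Iio d) with hS
    have hpow : ∀ k, ((u : R)) ^ k ∈ S := by
      intro k
      induction k using Nat.strong_induction_on with
      | _ k ih =>
        by_cases hk : k < d
        · exact Submodule.subset_span ⟨k, hk, rfl⟩
        · push_neg at hk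
          have hsum : ((u : R)) ^ d = - ∑ i ∈ Finset.range d, q.coeff i • ((u : R)) ^ i := by
            have h0 := hqe
            rw [Polynomial.aeval_eq_sum_range, Finset.sum_range_succ, ← hd,
              hqm.coeff_natDegree, one_smul] at h0
            exact eq_neg_of_add_eq_zero_right h0
          have hkd : ((u : R)) ^ k = ((u : R)) ^ (k - d) * ((u : R)) ^ d := by
            rw [← pow_add]; congr 1; omega
          rw [hkd, hsum, mul_neg, Finset.mul_sum]
          apply Submodule.neg_mem
          apply Submodule.sum_mem
          intro i hi
          rw [mul_smul_comm, ← pow_add]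
          apply Submodule.smul_mem
          have hilt : i < d := Finset.mem_range.mp hi
          exact ih (k - d + i) (by omega)
    have hfin : ((S : Submodule F R) : Set R).Finite :=
      finite_span_of_finite ((Set.finite_Iio d).image _)
    obtain ⟨a, -, b, -, hab, he⟩ :=
      Set.Infinite.exists_ne_map_eq_of_mapsTo (f := fun k : ℕ => ((u : R)) ^ k)
        Set.infinite_univ (fun k _ => hpow k) hfin
    rcases hab.lt_or_gt with hlt | hlt
    · exact main a b hlt he
    · exact main b a hlt he.symm

end SpanFinite

section GroupFinite

/-- helper : reduce exponents modulo a torsion order. -/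
lemma pow_mod_of_pow_eq_one {G : Type*} [Monoid G] {a : G} {N : ℕ} (hN : a ^ N = 1) (m : ℕ) :
    a ^ m = a ^ (m % N) := by
  conv_lhs => rw [← Nat.mod_add_div m N]
  rw [pow_add, pow_mul, hN, one_pow, mul_one]

/-- The closure of a finite set of pairwise commuting torsion elements is finite. -/
lemma finite_closure_of_comm_torsion {G : Type*} [Group G] {S : Set G} (hS : S.Finite)
    (hcomm : ∀ a ∈ S, ∀ b ∈ S, a * b = b * a)
    (htor : ∀ a ∈ S, ∃ N, 1 ≤ N ∧ a ^ N = 1) :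
    ((Subgroup.closure S : Subgroup G) : Set G).Finite := by
  refine Set.Finite.induction_on_subset _ hS ?_ ?_
  · rw [Subgroup.closure_empty]
    exact (Set.finite_singleton 1).subset (by simp)
  · intro a s' haS hs'S _ ih
    obtain ⟨N, hN1, hNa⟩ := htor a haS
    have hacomm : ∀ g ∈ Subgroup.closure s', Commute a g := by
      intro g hg
      refine Subgroup.closure_induction (fun x hx => ?_) (Commute.one_right a)
        (fun x y _ _ hx hy => hx.mul_right hy) (fun x _ hx => hx.inv_right) hg
      exact (hcomm a haS x (hs'S hx))
    have hsub : ((Subgroup.closure (insert a s') : Subgroup G) : Set G) ⊆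
        Set.image2 (fun (g : G) (k : ℕ) => g * a ^ k)
          ((Subgroup.closure s' : Subgroup G) : Set G) (Set.Iio N) := by
      intro x hx
      have key : ∃ g ∈ Subgroup.closure s', ∃ k < N, x = g * a ^ k := by
        refine Subgroup.closure_induction
          (p := fun x _ => ∃ g ∈ Subgroup.closure s', ∃ k < N, x = g * a ^ k) ?_ ?_ ?_ ?_ hx
        · rintro x (rfl | hxs)
          · exact ⟨1, one_mem _, 1 % N, Nat.mod_lt _ (by omega),
              by rw [one_mul, ← pow_mod_of_pow_eq_one hNa 1, pow_one]⟩
          · exact ⟨x, Subgroup.subset_closure hxs, 0, by omega, by rw [pow_zero, mul_one]⟩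
        · exact ⟨1, one_mem _, 0, by omega, by rw [pow_zero, mul_one]⟩
        · rintro x y _ _ ⟨g, hg, j, hj, rfl⟩ ⟨g', hg', k, hk, rfl⟩
          refine ⟨g * g', mul_mem hg hg', (j + k) % N, Nat.mod_lt _ (by omega), ?_⟩
          have hcg' : a ^ j * g' = g' * a ^ j := ((hacomm g' hg').pow_left j).eq
          rw [← pow_mod_of_pow_eq_one hNa (j + k), pow_add]
          calc g * a ^ j * (g' * a ^ k) = g * (a ^ j * g') * a ^ k := by group
            _ = g * (g' * a ^ j) * a ^ k := by rw [hcg']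
            _ = g * g' * (a ^ j * a ^ k) := by group
        · rintro x _ ⟨g, hg, k, hk, rfl⟩
          refine ⟨g⁻¹, inv_mem hg, (k * (N - 1)) % N, Nat.mod_lt _ (by omega), ?_⟩
          have h1 : a ^ k * a ^ (k * (N - 1)) = 1 := by
            rw [← pow_add]
            have hNk : k + k * (N - 1) = k * N := by
              have hN' : 1 + (N - 1) = N := by omega
              calc k + k * (N - 1) = k * (1 + (N - 1)) := by ring
                _ = k * N := by rw [hN']
            rw [hNk, pow_mul', hNa, one_pow]
          calc (g * a ^ k)⁻¹ = (a ^ k)⁻¹ * g⁻¹ := by rw [mul_inv_rev]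
            _ = a ^ (k * (N - 1)) * g⁻¹ := by rw [inv_eq_of_mul_eq_one_right h1]
            _ = g⁻¹ * a ^ (k * (N - 1)) := (((hacomm g hg).pow_left _).inv_right.eq)
            _ = g⁻¹ * a ^ ((k * (N - 1)) % N) := by rw [← pow_mod_of_pow_eq_one hNa]
      obtain ⟨g, hg, k, hk, rfl⟩ := key
      exact Set.mem_image2_of_mem hg hk
    exact ((ih.image2 _ (Set.finite_Iio N)).subset hsub)

end GroupFinite

section ClosureFinite

variable {F : Type*} [Field F] {R : Type*} [Ring R] [Algebra F R]

/-- The subgroup generated by two FC-units is finite (over a finite field). -/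
lemma FC_closure_finite [Finite F] (halg : ∀ a ∈ FCSubring R, IsAlgebraic F a)
    {u v : Rˣ} (hu : u ∈ FCRadical R) (hv : v ∈ FCRadical R) :
    ((Subgroup.closure ({u, v} : Set Rˣ) : Subgroup Rˣ) : Set Rˣ).Finite := by
  classical
  set Γ := Subgroup.closure ({u, v} : Set Rˣ) with hΓ
  have hΓΔ : Γ ≤ FCRadical R := by
    rw [hΓ, Subgroup.closure_le]
    rintro x (rfl | rfl)
    · exact hu
    · exact hv
  haveI : (unitCentralizer ((u : R))).FiniteIndex := hu
  haveI : (unitCentralizer ((v : R))).FiniteIndex := hv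
  set K := unitCentralizer ((u : R)) ⊓ unitCentralizer ((v : R)) with hK
  haveI hKfi : K.FiniteIndex := inferInstance
  have unitcomm : ∀ (z x : Rˣ), ((z : R) * (x : R) = (x : R) * (z : R)) → z * x = x * z :=
    fun z x h => Units.ext (by rw [Units.val_mul, Units.val_mul]; exact h)
  have hcent : ∀ z ∈ K, ∀ g ∈ Γ, z * g = g * z := by
    intro z hz g hg
    have : Commute z g := by
      refine Subgroup.closure_induction (fun x hx => ?_) (Commute.one_right z)
        (fun x y _ _ hx hy => hx.mul_right hy) (fun x _ hx => hx.inv_right) hg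
      rcases hx with rfl | rfl
      · exact unitcomm z x hz.1
      · exact unitcomm z x hz.2
    exact this.eq
  haveI hΓfg : Group.FG Γ := by
    refine (Group.fg_iff_subgroup_fg Γ).mpr ((Subgroup.fg_iff Γ).mpr ⟨{u, v}, rfl, ?_⟩)
    exact (Set.finite_singleton v).insert u
  have hZfg : Group.FG (K.subgroupOf Γ) := Subgroup.fg_of_index_ne_zero _
  obtain ⟨SZ, hSZclos, hSZfin⟩ :=
    (Subgroup.fg_iff _).mp ((Group.fg_iff_subgroup_fg (K.subgroupOf Γ)).mp hZfg)
  have hmap : Subgroup.closure (Γ.subtype '' SZ) = K ⊓ Γ := by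
    rw [← MonoidHom.map_closure, hSZclos, Subgroup.subgroupOf_map_subtype]
  have hzmem : ∀ z ∈ Γ.subtype '' SZ, z ∈ K ⊓ Γ := fun z hz => by
    rw [← hmap]; exact Subgroup.subset_closure hz
  have hGZ : ((Subgroup.closure (Γ.subtype '' SZ) : Subgroup Rˣ) : Set Rˣ).Finite := by
    apply finite_closure_of_comm_torsion (hSZfin.image _)
    · intro a ha b hb
      exact hcent a (hzmem a ha).1 b (hzmem b hb).2
    · intro a ha
      exact FC_torsion halg (hΓΔ (hzmem a ha).2)
  rw [hmap] at hGZ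
  haveI : Finite (Rˣ ⧸ K) := inferInstance
  have hcover : (Γ : Set Rˣ) ⊆
      ⋃ (b : Rˣ ⧸ K), {x : Rˣ | x ∈ Γ ∧ (QuotientGroup.mk x : Rˣ ⧸ K) = b} := by
    intro x hx
    exact Set.mem_iUnion.mpr ⟨_, hx, rfl⟩
  refine Set.Finite.subset (Set.finite_iUnion ?_) hcover
  intro b
  by_cases hb : ∃ γ : Rˣ, γ ∈ Γ ∧ (QuotientGroup.mk γ : Rˣ ⧸ K) = b
  · obtain ⟨γ, hγΓ, hγb⟩ := hb
    have hsub : {x : Rˣ | x ∈ Γ ∧ (QuotientGroup.mk x : Rˣ ⧸ K) = b} ⊆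
        (fun z => γ * z) '' ((K ⊓ Γ : Subgroup Rˣ) : Set Rˣ) := by
      rintro x ⟨hxΓ, hxb⟩
      have hqeq : (QuotientGroup.mk γ : Rˣ ⧸ K) = QuotientGroup.mk x := by rw [hγb, hxb]
      have hKm : γ⁻¹ * x ∈ K := QuotientGroup.eq.mp hqeq
      have hΓm : γ⁻¹ * x ∈ Γ := mul_mem (inv_mem hγΓ) hxΓ
      exact ⟨γ⁻¹ * x, ⟨hKm, hΓm⟩, by simp⟩
    exact (hGZ.image _).subset hsub
  · apply Set.Finite.subset Set.finite_empty
    intro x hx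
    exact absurd ⟨x, hx.1, hx.2⟩ hb

end ClosureFinite

section Corner

variable {R : Type*} [Ring R]

/-- In a finite unital corner in which every element is nilpotent or invertible,
any two elements commute modulo nilpotents (via Wedderburn's little theorem). -/
lemma corner_comm (P : R → Prop) (f₀ : R)
    (hPfin : {x : R | P x}.Finite)
    (hf0 : P f₀) (hf₀ne : f₀ ≠ 0)
    (hzero : P 0)
    (hadd : ∀ x y, P x → P y → P (x + y))
    (hneg : ∀ x, P x → P (-x))
    (hmul : ∀ x y, P x → P y → P (x * y))
    (hidl : ∀ x, P x → f₀ * x = x)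
    (hidr : ∀ x, P x → x * f₀ = x)
    (hdich : ∀ x, P x → IsNilpotent x ∨ ∃ y, P y ∧ x * y = f₀ ∧ y * x = f₀)
    {s t : R} (hs : P s) (ht : P t) :
    IsNilpotent (s * t - t * s) := by
  classical
  -- R-level facts
  have hPpow : ∀ x, P x → ∀ n : ℕ, P (x ^ (n + 1)) := by
    intro x hx n
    induction n with
    | zero => simpa using hx
    | succ n ih => rw [pow_succ]; exact hmul _ _ ih hx
  have hf₀idem : f₀ * f₀ = f₀ := hidl _ hf0
  have hone0 : (1 : R) = 0 → False := by
    intro h10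
    apply hf₀ne
    calc f₀ = f₀ * 1 := (mul_one _).symm
      _ = 0 := by rw [h10, mul_zero]
  have hker : ∀ x, P x → (∃ w, P w ∧ w * x = f₀) → IsNilpotent x → False := by
    rintro x hx ⟨w, hw, hwx⟩ ⟨m, hm⟩
    have hiter : ∀ k : ℕ, w ^ (k + 1) * x ^ (k + 1) = f₀ := by
      intro k
      induction k with
      | zero => simpa [pow_one] using hwx
      | succ k ih =>
        have hx' : P (x ^ (k + 1)) := hPpow x hx k
        calc w ^ (k + 2) * x ^ (k + 2)
            = (w ^ (k + 1) * w) * (x * x ^ (k + 1)) := by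
              rw [pow_succ w (k + 1), pow_succ' x (k + 1)]
          _ = w ^ (k + 1) * ((w * x) * x ^ (k + 1)) := by noncomm_ring
          _ = w ^ (k + 1) * (f₀ * x ^ (k + 1)) := by rw [hwx]
          _ = w ^ (k + 1) * x ^ (k + 1) := by rw [hidl _ hx']
          _ = f₀ := ih
    cases m with
    | zero => exact hone0 (by simpa using hm)
    | succ m =>
      apply hf₀ne
      rw [← hiter m, hm, mul_zero]
  have hkerR : ∀ x, P x → (∃ w, P w ∧ x * w = f₀) → IsNilpotent x → False := by
    rintro x hx ⟨w, hw, hxw⟩ ⟨m, hm⟩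
    have hiter : ∀ k : ℕ, x ^ (k + 1) * w ^ (k + 1) = f₀ := by
      intro k
      induction k with
      | zero => simpa [pow_one] using hxw
      | succ k ih =>
        have hx' : P (x ^ (k + 1)) := hPpow x hx k
        calc x ^ (k + 2) * w ^ (k + 2)
            = (x ^ (k + 1) * x) * (w * w ^ (k + 1)) := by
              rw [pow_succ x (k + 1), pow_succ' w (k + 1)]
          _ = x ^ (k + 1) * ((x * w) * w ^ (k + 1)) := by noncomm_ring
          _ = x ^ (k + 1) * (f₀ * w ^ (k + 1)) := by rw [hxw]
          _ = x ^ (k + 1) * w ^ (k + 1) := by rw [hidl _ (hPpow w hw k)]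
          _ = f₀ := ih
    cases m with
    | zero => exact hone0 (by simpa using hm)
    | succ m =>
      apply hf₀ne
      rw [← hiter m, hm, zero_mul]
  have hJmul : ∀ x z, P x → P z → IsNilpotent x →
      IsNilpotent (z * x) ∧ IsNilpotent (x * z) := by
    intro x z hx hz hnil
    constructor
    · rcases hdich (z * x) (hmul _ _ hz hx) with h | ⟨y, hy, _, hy2⟩
      · exact h
      · exact absurd hnil (fun hn => hker x hx ⟨y * z, hmul _ _ hy hz,
          by rw [mul_assoc]; exact hy2⟩ hn)
    · rcases hdich (x * z) (hmul _ _ hx hz) with h | ⟨y, hy, hy1, _⟩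
      · exact h
      · exact absurd hnil (fun hn => hkerR x hx ⟨z * y, hmul _ _ hz hy,
          by rw [← mul_assoc]; exact hy1⟩ hn)
  have hf₀pow : ∀ k : ℕ, f₀ ^ (k + 1) = f₀ := by
    intro k
    induction k with
    | zero => rw [pow_one]
    | succ k ih => rw [pow_succ, ih, hf₀idem]
  have hf₀nil : ¬ IsNilpotent f₀ := by
    rintro ⟨m, hm⟩
    cases m with
    | zero => exact hone0 (by simpa using hm)
    | succ m => exact hf₀ne (by rw [← hf₀pow m, hm])
  have hJadd : ∀ x y, P x → P y → IsNilpotent x → IsNilpotent y → IsNilpotent (x + y) := by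
    intro x y hx hy hnx hny
    rcases hdich (x + y) (hadd _ _ hx hy) with h | ⟨w, hw, _, hw2⟩
    · exact h
    · exfalso
      have hsum : w * x + w * y = f₀ := by rw [← mul_add]; exact hw2
      have hm1 : IsNilpotent (w * x) := (hJmul x w hx hw hnx).1
      have hm2 : IsNilpotent (w * y) := (hJmul y w hy hw hny).1
      have hcomm : Commute (w * x) (w * y) := by
        have h1 : w * y = f₀ - w * x := eq_sub_of_add_eq' hsum
        rw [h1]
        have hPwx : P (w * x) := hmul _ _ hw hx
        have hcf : Commute (w * x) f₀ := by
          show (w * x) * f₀ = f₀ * (w * x)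
          rw [hidr _ hPwx, hidl _ hPwx]
        exact hcf.sub_right (Commute.refl _)
      have := hcomm.isNilpotent_add hm1 hm2
      rw [hsum] at this
      exact hf₀nil this
  -- the corner ring structure on the subtype
  letI : Zero {x : R // P x} := ⟨⟨0, hzero⟩⟩
  letI : Add {x : R // P x} := ⟨fun a b => ⟨a.1 + b.1, hadd _ _ a.2 b.2⟩⟩
  letI : Neg {x : R // P x} := ⟨fun a => ⟨-a.1, hneg _ a.2⟩⟩
  letI : Mul {x : R // P x} := ⟨fun a b => ⟨a.1 * b.1, hmul _ _ a.2 b.2⟩⟩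
  letI : One {x : R // P x} := ⟨⟨f₀, hf0⟩⟩
  letI instACG : AddCommGroup {x : R // P x} :=
  { add_assoc := fun a b c => Subtype.ext (add_assoc _ _ _)
    zero_add := fun a => Subtype.ext (zero_add _)
    add_zero := fun a => Subtype.ext (add_zero _)
    add_comm := fun a b => Subtype.ext (add_comm _ _)
    neg_add_cancel := fun a => Subtype.ext (neg_add_cancel _)
    nsmul := nsmulRec
    zsmul := zsmulRec }
  letI instMon : Monoid {x : R // P x} :=
  { mul_assoc := fun a b c => Subtype.ext (mul_assoc _ _ _)
    one_mul := fun a => Subtype.ext (hidl _ a.2)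
    mul_one := fun a => Subtype.ext (hidr _ a.2) }
  letI instRing : Ring {x : R // P x} :=
  { instACG, instMon with
    left_distrib := fun a b c => Subtype.ext (left_distrib _ _ _)
    right_distrib := fun a b c => Subtype.ext (right_distrib _ _ _)
    zero_mul := fun a => Subtype.ext (zero_mul _)
    mul_zero := fun a => Subtype.ext (mul_zero _) }
  have val_mul : ∀ a b : {x : R // P x}, ((a * b : {x : R // P x})).1 = a.1 * b.1 :=
    fun _ _ => rfl
  have val_sub : ∀ a b : {x : R // P x}, ((a - b : {x : R // P x})).1 = a.1 - b.1 := by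
    intro a b
    rw [sub_eq_add_neg, sub_eq_add_neg]
    rfl
  -- the nilpotent congruence
  letI J : RingCon {x : R // P x} :=
  { r := fun a b => IsNilpotent ((a - b : {x : R // P x})).1
    iseqv := by
      refine ⟨fun a => ?_, fun {a b} h => ?_, fun {a b c} h1 h2 => ?_⟩
      · rw [sub_self]
        exact (IsNilpotent.zero : IsNilpotent (0 : R))
      · rw [val_sub] at h ⊢
        rw [← neg_sub]
        exact h.neg
      · rw [val_sub] at h1 h2 ⊢
        have hP1 : P (a.1 - b.1) := by rw [← val_sub]; exact (a - b).2
        have hP2 : P (b.1 - c.1) := by rw [← val_sub]; exact (b - c).2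
        have := hJadd _ _ hP1 hP2 h1 h2
        rwa [show (a.1 - b.1) + (b.1 - c.1) = a.1 - c.1 by abel] at this
    mul' := by
      intro w x y z h1 h2
      show IsNilpotent ((w * y - x * z : {x : R // P x})).1
      rw [val_sub, val_mul, val_mul]
      have h1' : IsNilpotent ((w - x : {x : R // P x})).1 := h1
      have h2' : IsNilpotent ((y - z : {x : R // P x})).1 := h2
      rw [val_sub] at h1' h2'
      have hP1 : P (y.1 - z.1) := by rw [← val_sub]; exact (y - z).2
      have hP2 : P (w.1 - x.1) := by rw [← val_sub]; exact (w - x).2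
      have hn1 : IsNilpotent (w.1 * (y.1 - z.1)) := (hJmul _ w.1 hP1 w.2 h2').1
      have hn2 : IsNilpotent ((w.1 - x.1) * z.1) := (hJmul _ z.1 hP2 z.2 h1').2
      have := hJadd _ _ (hmul _ _ w.2 hP1) (hmul _ _ hP2 z.2) hn1 hn2
      rwa [show w.1 * (y.1 - z.1) + (w.1 - x.1) * z.1 = w.1 * y.1 - x.1 * z.1 by noncomm_ring]
        at this
    add' := by
      intro w x y z h1 h2
      show IsNilpotent ((w + y - (x + z) : {x : R // P x})).1
      have h1' : IsNilpotent ((w - x : {x : R // P x})).1 := h1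
      have h2' : IsNilpotent ((y - z : {x : R // P x})).1 := h2
      rw [val_sub] at h1' h2' ⊢
      show IsNilpotent ((w.1 + y.1) - (x.1 + z.1))
      have hP1 : P (w.1 - x.1) := by rw [← val_sub]; exact (w - x).2
      have hP2 : P (y.1 - z.1) := by rw [← val_sub]; exact (y - z).2
      have := hJadd _ _ hP1 hP2 h1' h2'
      rwa [show (w.1 - x.1) + (y.1 - z.1) = (w.1 + y.1) - (x.1 + z.1) by abel] at this }
  -- quotient is a finite division ring, hence a field
  haveI hfinsub : Finite {x : R // P x} := hPfin.to_subtype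
  haveI : Finite J.Quotient := inferInstanceAs (Finite (Quotient J.toSetoid))
  haveI : Nontrivial J.Quotient := by
    refine ⟨((1 : {x : R // P x}) : J.Quotient), ((0 : {x : R // P x}) : J.Quotient), fun h => ?_⟩
    have hrel := J.eq.mp h
    have : IsNilpotent (((1 : {x : R // P x}) - 0 : {x : R // P x})).1 := hrel
    rw [sub_zero] at this
    exact hf₀nil this
  haveI : NoZeroDivisors J.Quotient := by
    constructor
    intro α β hab
    obtain ⟨a, rfl⟩ := Quot.exists_rep α
    obtain ⟨b, rfl⟩ := Quot.exists_rep β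
    have hab' : ((a * b : {x : R // P x}) : J.Quotient) = ((0 : {x : R // P x}) : J.Quotient) := by
      rw [J.coe_mul, J.coe_zero]
      exact hab
    have habn : IsNilpotent (((a * b : {x : R // P x})).1) := by
      have h2 : IsNilpotent ((a * b - 0 : {x : R // P x})).1 := J.eq.mp hab'
      rwa [sub_zero] at h2
    rw [val_mul] at habn
    by_cases hna : IsNilpotent a.1
    · left
      show ((a : {x : R // P x}) : J.Quotient) = 0
      rw [← J.coe_zero]
      refine (J.eq).mpr ?_
      show IsNilpotent ((a - 0 : {x : R // P x})).1
      rwa [sub_zero]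
    · right
      rcases hdich a.1 a.2 with h | ⟨w, hw, _, hw2⟩
      · exact absurd h hna
      · have hb : IsNilpotent b.1 := by
          have h1 : IsNilpotent (w * (a.1 * b.1)) :=
            (hJmul _ w (hmul _ _ a.2 b.2) hw habn).1
          rwa [← mul_assoc, hw2, hidl _ b.2] at h1
        show ((b : {x : R // P x}) : J.Quotient) = 0
        rw [← J.coe_zero]
        refine (J.eq).mpr ?_
        show IsNilpotent ((b - 0 : {x : R // P x})).1
        rwa [sub_zero]
  haveI : IsDomain J.Quotient := NoZeroDivisors.to_isDomain _
  letI : Fintype J.Quotient := Fintype.ofFinite _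
  letI : DecidableEq J.Quotient := Classical.decEq _
  letI : DivisionRing J.Quotient := Fintype.divisionRingOfIsDomain _
  letI : Field J.Quotient := littleWedderburn _
  have hcomm : ∀ α β : J.Quotient, α * β = β * α := fun α β => mul_comm α β
  -- conclude
  have hq : (((⟨s, hs⟩ : {x : R // P x}) * ⟨t, ht⟩ : {x : R // P x}) : J.Quotient)
      = (((⟨t, ht⟩ : {x : R // P x}) * ⟨s, hs⟩ : {x : R // P x}) : J.Quotient) := by
    rw [J.coe_mul, J.coe_mul]
    exact hcomm _ _
  have hrel := J.eq.mp hq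
  have hfinal : IsNilpotent
      (((⟨s, hs⟩ : {x : R // P x}) * ⟨t, ht⟩ - (⟨t, ht⟩ : {x : R // P x}) * ⟨s, hs⟩ :
        {x : R // P x})).1 := hrel
  rwa [val_sub, val_mul, val_mul] at hfinal

end Corner

section FiniteField

variable {F : Type*} [Field F] {R : Type*} [Ring R] [Algebra F R]

/-- Over a finite field, commutators of FC-units are nilpotent. -/
theorem FC_commutator_nilpotent_finite [Finite F] {H : Subgroup Rˣ} (hH : IsOmegaSubgroup H)
    (halg : ∀ a ∈ FCSubring R, IsAlgebraic F a)
    {u v : Rˣ} (hu : u ∈ FCRadical R) (hv : v ∈ FCRadical R) :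
    IsNilpotent ((u : R) * (v : R) - (v : R) * (u : R)) := by
  classical
  set Γ := Subgroup.closure ({u, v} : Set Rˣ) with hΓ
  have hΓfin : (Γ : Set Rˣ).Finite := FC_closure_finite halg hu hv
  have hΓΔ : Γ ≤ FCRadical R := by
    rw [hΓ, Subgroup.closure_le]
    rintro x (rfl | rfl)
    · exact hu
    · exact hv
  set B : Submodule F R := Submodule.span F ((fun g : Rˣ => (g : R)) '' (Γ : Set Rˣ)) with hB
  have hBfin : (B : Set R).Finite := finite_span_of_finite (hΓfin.image _)
  have hBmul : ∀ x ∈ B, ∀ y ∈ B, x * y ∈ B := by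
    intro x hx y hy
    have h1 : x * y ∈ B * B := Submodule.mul_mem_mul hx hy
    have h2 : B * B ≤ B := by
      rw [hB, Submodule.span_mul_span]
      apply Submodule.span_le.mpr
      rintro z ⟨z1, hz1, z2, hz2, rfl⟩
      obtain ⟨g1, hg1, rfl⟩ := hz1
      obtain ⟨g2, hg2, rfl⟩ := hz2
      exact Submodule.subset_span ⟨g1 * g2, mul_mem hg1 hg2, (Units.val_mul g1 g2).symm⟩
    exact h2 h1
  have hBFC : ∀ x ∈ B, x ∈ FCSubring R := by
    intro x hx
    refine Submodule.span_induction ?_ ?_ ?_ ?_ hx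
    · rintro y ⟨g, hg, rfl⟩
      exact FCRadical.coe_mem (hΓΔ hg)
    · exact FCSubring.zero_mem'
    · intro y z _ _ hy hz
      exact FCSubring.add_mem' hy hz
    · intro cc y _ hy
      exact FCSubring.smul_mem' cc hy
  have humem : ((u : R)) ∈ B :=
    Submodule.subset_span ⟨u, Subgroup.subset_closure (by simp), rfl⟩
  have hvmem : ((v : R)) ∈ B :=
    Submodule.subset_span ⟨v, Subgroup.subset_closure (by simp), rfl⟩
  set c : R := (u : R) * (v : R) - (v : R) * (u : R) with hc
  have hcB : c ∈ B := Submodule.sub_mem _ (hBmul _ humem _ hvmem) (hBmul _ hvmem _ humem)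
  by_contra hnotnil
  have hBpow : ∀ x, x ∈ B → ∀ k : ℕ, x ^ (k + 1) ∈ B := by
    intro x hx k
    induction k with
    | zero => simpa using hx
    | succ k ih => rw [pow_succ]; exact hBmul _ ih _ hx
  have hidempow : ∀ x, x ∈ B → ∃ N, 1 ≤ N ∧ x ^ N * x ^ N = x ^ N := by
    intro x hx
    obtain ⟨a, -, b', -, hab, he⟩ := Set.Infinite.exists_ne_map_eq_of_mapsTo
      (f := fun k : ℕ => x ^ (k + 1)) Set.infinite_univ (fun k _ => hBpow x hx k) hBfin
    rcases hab.lt_or_gt with hlt | hlt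
    · exact exists_idem_pow (by omega : a + 1 < b' + 1) he
    · exact exists_idem_pow (by omega : b' + 1 < a + 1) he.symm
  obtain ⟨N, hN1, hNidem⟩ := hidempow c hcB
  set e : R := c ^ N with he_def
  have heB : e ∈ B := by
    rw [he_def, show N = (N - 1) + 1 by omega]
    exact hBpow c hcB _
  have hee : e * e = e := hNidem
  have he0 : e ≠ 0 := fun h0 => hnotnil ⟨N, by rw [← he_def]; exact h0⟩
  set ID : Set R := {f | f ∈ B ∧ f * f = f ∧ f ≠ 0 ∧ f * e = f} with hID
  have hIDfin : ID.Finite := hBfin.subset (fun f hf => hf.1)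
  have heID : e ∈ ID := ⟨heB, hee, he0, hee⟩
  have hIDcent : ∀ f ∈ ID, ∀ r : R, f * r = r * f := fun f hf =>
    FC_idem_central hH (hBFC f hf.1) hf.2.1
  -- choose a minimal idempotent below e
  set T : Set ℕ := {n : ℕ | ∃ f ∈ ID, ({h : R | h ∈ ID ∧ h * f = h}).ncard = n} with hT
  have hTne : T.Nonempty := ⟨_, e, heID, rfl⟩
  obtain ⟨f₀, hf₀ID, hf₀rank⟩ := Nat.sInf_mem hTne
  have hMIN : ∀ g ∈ ID, g * f₀ = g → g = f₀ := by
    intro g hgID hgf₀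
    by_contra hne
    have hsub : {h : R | h ∈ ID ∧ h * g = h} ⊆ {h : R | h ∈ ID ∧ h * f₀ = h} := by
      rintro h ⟨hhID, hhg⟩
      refine ⟨hhID, ?_⟩
      rw [← hhg, mul_assoc, hgf₀]
    have hf₀notin : f₀ ∉ {h : R | h ∈ ID ∧ h * g = h} := by
      rintro ⟨-, hf₀g⟩
      apply hne
      calc g = g * f₀ := hgf₀.symm
        _ = f₀ * g := (hIDcent g hgID f₀).symm.symm ▸ (hIDcent g hgID f₀)
        _ = f₀ := hf₀g
    have hss : {h : R | h ∈ ID ∧ h * g = h} ⊂ {h : R | h ∈ ID ∧ h * f₀ = h} := by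
      refine ⟨hsub, fun hcontra => hf₀notin (hcontra ⟨hf₀ID, hf₀ID.2.1⟩)⟩
    have hlt : ({h : R | h ∈ ID ∧ h * g = h}).ncard < ({h : R | h ∈ ID ∧ h * f₀ = h}).ncard :=
      Set.ncard_lt_ncard hss (hIDfin.subset (fun x hx => hx.1))
    have hmemT : ({h : R | h ∈ ID ∧ h * g = h}).ncard ∈ T := ⟨g, hgID, rfl⟩
    have := Nat.sInf_le hmemT
    omega
  have hf₀B : f₀ ∈ B := hf₀ID.1
  have hf₀idem : f₀ * f₀ = f₀ := hf₀ID.2.1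
  have hf₀ne : f₀ ≠ 0 := hf₀ID.2.2.1
  have hf₀e : f₀ * e = f₀ := hf₀ID.2.2.2
  have hf₀cent : ∀ r : R, f₀ * r = r * f₀ := hIDcent f₀ hf₀ID
  -- the corner predicate
  set P : R → Prop := fun x => x ∈ B ∧ f₀ * x = x with hP
  have hPf : ∀ x, P x → x * f₀ = x := by
    intro x hx
    rw [← hf₀cent x]
    exact hx.2
  have hPmul : ∀ x y, P x → P y → P (x * y) := by
    intro x y hx hy
    exact ⟨hBmul _ hx.1 _ hy.1, by rw [← mul_assoc, hx.2]⟩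
  have hPpowmem : ∀ x, P x → ∀ k : ℕ, P (x ^ (k + 1)) := by
    intro x hx k
    induction k with
    | zero => simpa using hx
    | succ k ih => rw [pow_succ]; exact hPmul _ _ ih hx
  -- dichotomy in the corner
  have hdich : ∀ x, P x → IsNilpotent x ∨ ∃ y, P y ∧ x * y = f₀ ∧ y * x = f₀ := by
    intro x hx
    obtain ⟨M, hM1, hMidem⟩ := hidempow x hx.1
    by_cases hg0 : x ^ M = 0
    · exact Or.inl ⟨M, hg0⟩
    · right
      have hgP : P (x ^ M) := by
        rw [show M = (M - 1) + 1 by omega]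
        exact hPpowmem x hx _
      have hgf₀r : x ^ M * f₀ = x ^ M := hPf _ hgP
      have hge : x ^ M * e = x ^ M := by
        calc x ^ M * e = (x ^ M * f₀) * e := by rw [hgf₀r]
          _ = x ^ M * (f₀ * e) := by rw [mul_assoc]
          _ = x ^ M := by rw [hf₀e, hgf₀r]
      have hgID : x ^ M ∈ ID := ⟨hgP.1, hMidem, hg0, hge⟩
      have hgf : x ^ M = f₀ := hMIN _ hgID hgf₀r
      have h2M : (1:ℕ) ≤ 2 * M - 1 := by omega
      refine ⟨x ^ (2 * M - 1), ?_, ?_, ?_⟩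
      · rw [show 2 * M - 1 = (2 * M - 2) + 1 by omega]
        exact hPpowmem x hx _
      · calc x * x ^ (2 * M - 1) = x ^ (2 * M) := by
              rw [← pow_succ']
              congr 1
              omega
          _ = x ^ M * x ^ M := by rw [← pow_add]; congr 1; omega
          _ = x ^ M := hMidem
          _ = f₀ := hgf
      · calc x ^ (2 * M - 1) * x = x ^ (2 * M) := by
              rw [← pow_succ]
              congr 1
              omega
          _ = x ^ M * x ^ M := by rw [← pow_add]; congr 1; omega
          _ = x ^ M := hMidem
          _ = f₀ := hgf
  -- apply the corner lemma to s := f₀ * u, t := f₀ * v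
  have hsP : P (f₀ * (u : R)) := ⟨hBmul _ hf₀B _ humem, by rw [← mul_assoc, hf₀idem]⟩
  have htP : P (f₀ * (v : R)) := ⟨hBmul _ hf₀B _ hvmem, by rw [← mul_assoc, hf₀idem]⟩
  have hcornernil : IsNilpotent ((f₀ * (u : R)) * (f₀ * (v : R)) -
      (f₀ * (v : R)) * (f₀ * (u : R))) := by
    refine corner_comm P f₀ (hBfin.subset (fun x hx => hx.1)) ⟨hf₀B, hf₀idem⟩ hf₀ne
      ⟨Submodule.zero_mem _, mul_zero _⟩ ?_ ?_ hPmul (fun x hx => hx.2) hPf hdich hsP htP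
    · intro x y hx hy
      exact ⟨Submodule.add_mem _ hx.1 hy.1, by rw [mul_add, hx.2, hy.2]⟩
    · intro x hx
      exact ⟨Submodule.neg_mem _ hx.1, by rw [mul_neg, hx.2]⟩
  have hkey : (f₀ * (u : R)) * (f₀ * (v : R)) - (f₀ * (v : R)) * (f₀ * (u : R)) = f₀ * c := by
    have h1 : (f₀ * (u : R)) * (f₀ * (v : R)) = f₀ * ((u : R) * (v : R)) := by
      calc (f₀ * (u : R)) * (f₀ * (v : R)) = f₀ * ((u : R) * f₀) * (v : R) := by noncomm_ring
        _ = f₀ * (f₀ * (u : R)) * (v : R) := by rw [← hf₀cent ((u : R))]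
        _ = (f₀ * f₀) * ((u : R) * (v : R)) := by noncomm_ring
        _ = f₀ * ((u : R) * (v : R)) := by rw [hf₀idem]
    have h2 : (f₀ * (v : R)) * (f₀ * (u : R)) = f₀ * ((v : R) * (u : R)) := by
      calc (f₀ * (v : R)) * (f₀ * (u : R)) = f₀ * ((v : R) * f₀) * (u : R) := by noncomm_ring
        _ = f₀ * (f₀ * (v : R)) * (u : R) := by rw [← hf₀cent ((v : R))]
        _ = (f₀ * f₀) * ((v : R) * (u : R)) := by noncomm_ring
        _ = f₀ * ((v : R) * (u : R)) := by rw [hf₀idem]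
    rw [h1, h2, hc, mul_sub]
  rw [hkey] at hcornernil
  -- contradiction: f₀ * c is nilpotent but f₀ * c^N = f₀ ≠ 0
  obtain ⟨m, hm⟩ := hcornernil
  have hcomm : Commute f₀ c := hf₀cent c
  have hepow : ∀ k : ℕ, e ^ (k + 1) = e := by
    intro k
    induction k with
    | zero => rw [pow_one]
    | succ k ih => rw [pow_succ, ih, hee]
  have hf₀pow : ∀ k : ℕ, f₀ ^ (k + 1) = f₀ := by
    intro k
    induction k with
    | zero => rw [pow_one]
    | succ k ih => rw [pow_succ, ih, hf₀idem]
  cases m with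
  | zero =>
    apply he0
    have h10 : (1 : R) = 0 := by simpa using hm
    calc e = e * 1 := (mul_one _).symm
      _ = 0 := by rw [h10, mul_zero]
  | succ m =>
    apply hf₀ne
    have hfc : f₀ * c ^ (m + 1) = 0 := by
      have := hm
      rw [hcomm.mul_pow, hf₀pow] at this
      exact this
    have hfe : f₀ * c ^ ((m + 1) * N) = f₀ := by
      have hcn : c ^ ((m + 1) * N) = e ^ (m + 1) := by rw [he_def, ← pow_mul, mul_comm N (m+1)]
      rw [hcn, hepow, hf₀e]
    have hsplit : f₀ * c ^ ((m + 1) * N) = (f₀ * c ^ (m + 1)) * c ^ ((m + 1) * N - (m + 1)) := by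
      rw [mul_assoc, ← pow_add]
      congr 2
      have : m + 1 ≤ (m + 1) * N := Nat.le_mul_of_pos_right _ (by omega)
      omega
    rw [hsplit, hfc, zero_mul] at hfe
    exact hfe.symm

end FiniteField

/-- If `U(R)` contains an ω-subgroup and every element of `∇(R)` is
algebraic over `F`, then `ΔU` is nilpotent of class at most 2: every commutator of two
elements of `ΔU` is central in `ΔU`. -/
theorem fcRadical_nilpotent_of_algebraic (F : Type*) [Field F]
    (R : Type*) [Ring R] [Algebra F R]
    (H : Subgroup Rˣ) (hH : IsOmegaSubgroup H)
    (halg : ∀ a ∈ FCSubring R, IsAlgebraic F a) :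
    ∀ u ∈ FCRadical R, ∀ v ∈ FCRadical R, ∀ w ∈ FCRadical R,
      (u⁻¹ * v⁻¹ * u * v) * w = w * (u⁻¹ * v⁻¹ * u * v) := by
  intro u hu v hv w hw
  have hu' : ((u : R)) ∈ FCSubring R := FCRadical.coe_mem hu
  have hv' : ((v : R)) ∈ FCSubring R := FCRadical.coe_mem hv
  have hw' : ((w : R)) ∈ FCSubring R := FCRadical.coe_mem hw
  set c : R := (u : R) * (v : R) - (v : R) * (u : R) with hc
  have hcmem : c ∈ FCSubring R :=
    FCSubring.sub_mem' (FCSubring.mul_mem' hu' hv') (FCSubring.mul_mem' hv' hu')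
  have hcnil : IsNilpotent c := by
    rcases finite_or_infinite F with hF | hF
    · exact FC_commutator_nilpotent_finite hH halg hu hv
    · have h0 : (v : R) * (u : R) = (u : R) * (v : R) :=
        FCSubring.comm_of_infinite halg hu' hv'
      have : c = 0 := by rw [hc, h0, sub_self]
      rw [this]; exact IsNilpotent.zero
  set z : R := ((u⁻¹ * v⁻¹ : Rˣ) : R) with hzdef
  have hz : z ∈ FCSubring R := FCRadical.coe_mem (mul_mem (inv_mem hu) (inv_mem hv))
  have hzc : c * z = z * c := FC_nilpotent_comm hH hcmem hz hcnil
  set k : Rˣ := u⁻¹ * v⁻¹ * u * v with hk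
  have hkmem : k ∈ FCRadical R := mul_mem (mul_mem (mul_mem (inv_mem hu) (inv_mem hv)) hu) hv
  have hkval : (k : R) - 1 = z * c := by
    have h1 : z * ((u : R) * (v : R)) = (k : R) := by
      rw [hk, hzdef]
      simp only [Units.val_mul]
      noncomm_ring
    have h2 : z * ((v : R) * (u : R)) = 1 := by
      rw [hzdef]
      simp only [Units.val_mul]
      calc ((u⁻¹ : Rˣ) : R) * ((v⁻¹ : Rˣ) : R) * ((v : R) * (u : R))
          = ((u⁻¹ : Rˣ) : R) * (((v⁻¹ : Rˣ) : R) * (v : R)) * (u : R) := by noncomm_ring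
        _ = 1 := by
            rw [← Units.val_mul, inv_mul_cancel, Units.val_one, mul_one, ← Units.val_mul,
              inv_mul_cancel, Units.val_one]
    calc (k : R) - 1 = z * ((u : R) * (v : R)) - z * ((v : R) * (u : R)) := by rw [h1, h2]
      _ = z * c := by rw [hc, mul_sub]
  have hκmem : (k : R) - 1 ∈ FCSubring R :=
    FCSubring.sub_mem' (FCRadical.coe_mem hkmem) FCSubring.one_mem'
  have hκnil : IsNilpotent ((k : R) - 1) := by
    rw [hkval]
    obtain ⟨m, hm⟩ := hcnil
    have hcz : Commute c z := hzc
    exact ⟨m, by rw [hcz.symm.mul_pow, hm, mul_zero]⟩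
  have hfin : ((k : R) - 1) * (w : R) = (w : R) * ((k : R) - 1) :=
    FC_nilpotent_comm hH hκmem hw' hκnil
  have hkw : (k : R) * (w : R) = (w : R) * (k : R) := by
    have h := hfin
    rw [sub_mul, mul_sub, one_mul, mul_one] at h
    have := congrArg (fun x => x + (w : R)) h
    simpa [sub_add_cancel] using this
  exact Units.ext (by rw [Units.val_mul, Units.val_mul]; exact hkw)
end
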